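/- arXiv:0907.0206 — 7 statements merged into one kernel-verified Lean document; each statement's English description precedes it below -/
import Mathlib

section
/- Let β be a Pisot number and let β_1, …, β_s be its non-real Galois conjugates with positive imaginary part (one from each complex-conjugate pair of roots of its minimal polynomial). Write φ_j := Arg(β_j)/(2π), so that β_j = |β_j|·e^{2πiφ_j}. If integers k_0, k_1, …, k_s satisfy k_0 + k_1 φ_1 + ⋯ + k_s φ_s = 0, then k_0 = k_1 = ⋯ = k_s = 0; in other words, the real numbers 1, φ_1, …, φ_s are linearly independent over ℚ. -/
open Polynomial

noncomputable section

/-- The β-transformation `x ↦ βx - ⌊βx⌋` on `[0,1)`. -/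
def betaT (β : ℝ) (x : ℝ) : ℝ := β * x - ⌊β * x⌋

/-- `x` has a purely periodic β-expansion. -/
def PurelyPeriodic (β x : ℝ) : Prop := ∃ p : ℕ, 1 ≤ p ∧ (betaT β)^[p] x = x

/-- `x` has a finite β-expansion. -/
def FiniteExp (β x : ℝ) : Prop := ∃ n : ℕ, (betaT β)^[n] x = 0

/-- `γ(β)`: the supremum of `c ∈ [0,1)` such that every rational in `[0,c]`
has a purely periodic β-expansion. -/
def gamma (β : ℝ) : ℝ :=
  sSup {c | c ∈ Set.Ico (0 : ℝ) 1 ∧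
    ∀ r : ℚ, 0 ≤ (r : ℝ) → (r : ℝ) ≤ c → PurelyPeriodic β (r : ℝ)}

/-- `β` is a Pisot number. -/
def IsPisot (β : ℝ) : Prop :=
  1 < β ∧ IsIntegral ℤ β ∧
    ∀ z : ℂ, aeval z (minpoly ℚ β) = 0 → z ≠ (β : ℂ) → ‖z‖ < 1

/-- `β` is a Pisot unit. -/
def IsPisotUnit (β : ℝ) : Prop := IsPisot β ∧ IsIntegral ℤ β⁻¹

/-- Property (F): every element of `ℤ[β, β⁻¹] ∩ [0,1)` has a finite β-expansion. -/
def PropertyF (β : ℝ) : Prop :=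
  ∀ x : ℝ, x ∈ Subring.closure ({β, β⁻¹} : Set ℝ) → x ∈ Set.Ico (0 : ℝ) 1 → FiniteExp β x

/-- All Galois conjugates of `β` other than `β` itself are non-real. -/
def NonRealConjugates (β : ℝ) : Prop :=
  ∀ z : ℂ, aeval z (minpoly ℚ β) = 0 → z ≠ (β : ℂ) → z.im ≠ 0

/-- The field `ℚ(β)` as a subfield of `ℝ`. -/
def Qbeta (β : ℝ) : IntermediateField ℚ ℝ := IntermediateField.adjoin ℚ {β}

/-- `β` as an element of `ℚ(β)`. -/
def genβ (β : ℝ) : Qbeta β := ⟨β, IntermediateField.mem_adjoin_simple_self ℚ β⟩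

/-- The set of β-integers. -/
def IntBeta (β : ℝ) : Set ℝ :=
  {x | 0 ≤ x ∧ ∃ k : ℕ, β ^ (-(k : ℤ)) * x ∈ Set.Ico (0 : ℝ) 1 ∧
    (betaT β)^[k] (β ^ (-(k : ℤ)) * x) = 0}

/-- The central tile `𝒯 = closure σ(Int(β))`. -/
def centralTile (β : ℝ) (σ : Qbeta β →+* ℂ) : Set ℂ :=
  closure {z | ∃ x : Qbeta β, (x : ℝ) ∈ IntBeta β ∧ z = σ x}

/-- `z` is a spiral point with respect to `X`: every ray of positive length issued from `z`
meets both the interior and the complement of `X`. -/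
def SpiralPoint (X : Set ℂ) (z : ℂ) : Prop :=
  ∀ ε : ℝ, 0 < ε → ∀ θ : ℝ,
    (∃ ρ : ℝ, ρ ∈ Set.Ico (0 : ℝ) ε ∧
      z + (ρ : ℂ) * Complex.exp (θ * Complex.I) ∈ interior X) ∧
    (∃ ρ : ℝ, ρ ∈ Set.Ico (0 : ℝ) ε ∧
      z + (ρ : ℂ) * Complex.exp (θ * Complex.I) ∉ X)

/-- The successor of `x` in `Int(β)`. -/
def succIn (β : ℝ) (x : ℝ) : ℝ := sInf {y | y ∈ IntBeta β ∧ x < y}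

/-- The subtile `𝒯_i` of the central tile. -/
def subtile (β : ℝ) (σ : Qbeta β →+* ℂ) (i : ℕ) : Set ℂ :=
  closure {z | ∃ x : Qbeta β, (x : ℝ) ∈ IntBeta β ∧
    succIn β (x : ℝ) - (x : ℝ) = (betaT β)^[i] 1 ∧ z = σ x}

/-- Auxiliary equality-case lemma: if a weighted sum of "logs" vanishes, the weights are
bounded by `M`, attained at `w0`, all other logs are negative, and the total log is
nonnegative, then all weights equal `M`. -/
lemma aux_all_eq_max {ι : Type*} (T : Finset ι) (L : ι → ℝ) (e : ι → ℤ) (M : ℤ)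
    (w0 : ι) (hw0 : w0 ∈ T) (hL0 : 0 ≤ ∑ w ∈ T, L w)
    (hLneg : ∀ w ∈ T, w ≠ w0 → L w < 0)
    (he : ∀ w ∈ T, e w ≤ M) (hew0 : e w0 = M) (hM : 0 ≤ M)
    (hsum : ∑ w ∈ T, (e w : ℝ) * L w = 0) :
    ∀ w ∈ T, e w = M := by
  classical
  have hnonpos : ∀ w ∈ T, ((M - e w : ℤ) : ℝ) * L w ≤ 0 := by
    intro w hw
    rcases eq_or_ne w w0 with rfl | hne
    · simp [hew0]
    · have h1 := hLneg w hw hne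
      have h2 : (0:ℝ) ≤ ((M - e w : ℤ) : ℝ) := by
        exact_mod_cast sub_nonneg.mpr (he w hw)
      nlinarith
  have h1 : ∑ w ∈ T, ((M - e w : ℤ) : ℝ) * L w
      = (M:ℝ) * ∑ w ∈ T, L w - ∑ w ∈ T, (e w : ℝ) * L w := by
    rw [Finset.mul_sum, ← Finset.sum_sub_distrib]
    refine Finset.sum_congr rfl fun w hw => ?_
    push_cast; ring
  have hge : 0 ≤ ∑ w ∈ T, ((M - e w : ℤ) : ℝ) * L w := by
    rw [h1, hsum, sub_zero]
    exact mul_nonneg (by exact_mod_cast hM) hL0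
  have hle : ∑ w ∈ T, ((M - e w : ℤ) : ℝ) * L w ≤ 0 := Finset.sum_nonpos hnonpos
  have hzero := (Finset.sum_eq_zero_iff_of_nonpos hnonpos).mp (le_antisymm hle hge)
  intro w hw
  rcases eq_or_ne w w0 with rfl | hne
  · exact hew0
  · have h3 := hzero w hw
    have h4 := (hLneg w hw hne).ne
    rcases mul_eq_zero.mp h3 with h5 | h5
    · have : (M - e w : ℤ) = 0 := by exact_mod_cast h5
      omega
    · exact absurd h5 h4

theorem statement6 (β : ℝ) (hp : IsPisot β) (k0 : ℤ) (k : ℂ → ℤ)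
    (h : (k0 : ℝ) + ∑ z ∈ ((minpoly ℚ β).aroots ℂ).toFinset.filter (fun z => 0 < z.im),
        (k z : ℝ) * (Complex.arg z / (2 * Real.pi)) = 0) :
    k0 = 0 ∧
      ∀ z ∈ ((minpoly ℚ β).aroots ℂ).toFinset.filter (fun z => 0 < z.im), k z = 0 := by
  classical
  obtain ⟨hβ1, hβZ, hconj⟩ := hp
  have hβQ : IsIntegral ℚ β := hβZ.tower_top
  set p : ℚ[X] := minpoly ℚ β with hpdef
  have hirr : Irreducible p := minpoly.irreducible hβQ
  have hpne : p ≠ 0 := minpoly.ne_zero hβQ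
  have hmonic : p.Monic := minpoly.monic hβQ
  have hβne0 : β ≠ 0 := by linarith
  have hsep : p.Separable := hirr.separable
  set R : Finset ℂ := (p.aroots ℂ).toFinset with hRdef
  set S : Finset ℂ := R.filter (fun z => 0 < z.im) with hSdef
  -- basic root facts
  have hmemR : ∀ z : ℂ, z ∈ R ↔ aeval z p = 0 := by
    intro z
    rw [hRdef, Multiset.mem_toFinset, mem_aroots]
    exact ⟨fun h => h.2, fun h => ⟨hpne, h⟩⟩
  have hβR : (β : ℂ) ∈ R := by
    rw [hmemR]
    have h0 : ((β:ℝ):ℂ) = (IsScalarTower.toAlgHom ℚ ℝ ℂ) β := rfl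
    rw [h0, aeval_algHom_apply, minpoly.aeval, map_zero]
  have hcoeff0 : p.coeff 0 ≠ 0 := minpoly.coeff_zero_ne_zero hβQ hβne0
  have hR0 : ∀ z ∈ R, z ≠ 0 := by
    intro z hz h0
    rw [hmemR] at hz
    rw [h0, aeval_def, eval₂_at_zero] at hz
    exact hcoeff0 ((_root_.map_eq_zero (algebraMap ℚ ℂ)).mp hz)
  have habs : ∀ z ∈ R, z ≠ (β:ℂ) → ‖z‖ < 1 := fun z hz hne =>
    hconj z ((hmemR z).mp hz) hne
  have hconjR : ∀ z ∈ R, (starRingEnd ℂ) z ∈ R := by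
    intro z hz
    rw [hmemR] at hz ⊢
    have h1 := Polynomial.hom_eval₂ p (algebraMap ℚ ℂ) (starRingEnd ℂ) z
    rw [Subsingleton.elim ((starRingEnd ℂ).comp (algebraMap ℚ ℂ)) (algebraMap ℚ ℂ)] at h1
    rw [aeval_def] at hz ⊢
    rw [← h1, hz, map_zero]
  -- the splitting field and the embedding into ℂ
  have hsplit : (p.map (algebraMap ℚ ℂ)).Splits := IsAlgClosed.splits _
  set K := p.SplittingField with hKdef
  set ι : K →ₐ[ℚ] ℂ := SplittingField.lift p hsplit with hιdef
  have hinj : Function.Injective ι := ι.toRingHom.injective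
  set T : Finset K := (p.aroots K).toFinset with hTdef
  have hmemT : ∀ w : K, w ∈ T ↔ aeval w p = 0 := by
    intro w
    rw [hTdef, Multiset.mem_toFinset, mem_aroots]
    exact ⟨fun h => h.2, fun h => ⟨hpne, h⟩⟩
  have hndC : (p.aroots ℂ).Nodup := nodup_roots hsep.map
  have hndK : (p.aroots K).Nodup := nodup_roots hsep.map
  have hmap : (p.aroots K).map (ι : K →+* ℂ) = p.aroots ℂ := by
    rw [aroots_def, aroots_def]
    have hsK : (p.map (algebraMap ℚ K)).Splits := SplittingField.splits p
    rw [← hsK.roots_map (ι : K →+* ℂ)]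
    rw [map_map, AlgHom.comp_algebraMap]
  have hTR : ∀ w ∈ T, ι w ∈ R := by
    intro w hw
    rw [hRdef, Multiset.mem_toFinset, ← hmap]
    exact Multiset.mem_map_of_mem _ (Multiset.mem_toFinset.mp hw)
  have hsurj : ∀ z ∈ R, ∃ w ∈ T, ι w = z := by
    intro z hz
    rw [hRdef, Multiset.mem_toFinset, ← hmap] at hz
    obtain ⟨w, hw, hwz⟩ := Multiset.mem_map.mp hz
    exact ⟨w, Multiset.mem_toFinset.mpr hw, hwz⟩
  obtain ⟨wβ, hwβT, hwβ⟩ := hsurj (β:ℂ) hβR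
  have hT0 : ∀ w ∈ T, w ≠ 0 := by
    intro w hw h0
    exact hR0 (ι w) (hTR w hw) (by rw [h0, map_zero])
  -- the exponent functions
  set m : ℂ → ℤ := fun z =>
    if 0 < z.im then k z else if z.im < 0 then - k ((starRingEnd ℂ) z) else 0 with hmdef
  set n : K → ℤ := fun w => m (ι w) with hndef
  -- Step 1: the sum of weighted arguments
  have h2π : (2 * Real.pi) ≠ 0 := by positivity
  have hA : ∑ z ∈ S, (k z : ℝ) * Complex.arg z = -(2 * Real.pi * k0) := by
    have h1 : ∑ z ∈ S, (k z:ℝ) * (Complex.arg z / (2*Real.pi))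
        = (∑ z ∈ S, (k z:ℝ) * Complex.arg z) / (2*Real.pi) := by
      rw [Finset.sum_div]
      exact Finset.sum_congr rfl fun z hz => (mul_div_assoc _ _ _).symm
    rw [h1] at h
    field_simp at h
    linarith
  -- Step 2: the multiplicative relation in ℂ over S
  have hrelS : ∏ z ∈ S, (z / (starRingEnd ℂ) z) ^ (k z) = 1 := by
    have hdiv : ∀ z ∈ S, z / (starRingEnd ℂ) z
        = Complex.exp ((2 * Complex.arg z) * Complex.I) := by
      intro z hz
      have hz0 : z ≠ 0 := hR0 z (Finset.mem_filter.mp hz).1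
      have habs0 : ((‖z‖ : ℝ) : ℂ) ≠ 0 := by
        simpa using (norm_ne_zero_iff.mpr hz0)
      set a : ℝ := ‖z‖ with hadef
      set θ : ℝ := Complex.arg z with hθdef
      have hzeq : (a : ℂ) * Complex.exp (θ * Complex.I) = z :=
        Complex.norm_mul_exp_arg_mul_I z
      have hconjz : (starRingEnd ℂ) z
          = (a : ℂ) * Complex.exp (-θ * Complex.I) := by
        rw [← hzeq, map_mul, Complex.conj_ofReal, ← Complex.exp_conj]
        congr 1
        simp [Complex.conj_ofReal]
      rw [hconjz, ← hzeq, mul_div_mul_left _ _ habs0, ← Complex.exp_sub]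
      congr 1
      ring
    calc ∏ z ∈ S, (z / (starRingEnd ℂ) z) ^ (k z)
        = ∏ z ∈ S, Complex.exp ((k z) * ((2 * Complex.arg z) * Complex.I)) := by
          refine Finset.prod_congr rfl fun z hz => ?_
          rw [hdiv z hz, Complex.exp_int_mul]
      _ = Complex.exp (∑ z ∈ S, (k z) * ((2 * Complex.arg z) * Complex.I)) := by
          rw [Complex.exp_sum]
      _ = 1 := by
          have hsum : ∑ z ∈ S, ((k z):ℂ) * ((2 * Complex.arg z) * Complex.I)
              = ((-2 * k0 : ℤ) : ℂ) * (2 * Real.pi * Complex.I) := by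
            have h1 : ∑ z ∈ S, ((k z):ℂ) * ((2 * Complex.arg z) * Complex.I)
                = ((∑ z ∈ S, (k z : ℝ) * Complex.arg z : ℝ) : ℂ) * (2 * Complex.I) := by
              push_cast
              rw [Finset.sum_mul]
              refine Finset.sum_congr rfl fun z hz => ?_
              ring
            rw [h1, hA]
            push_cast
            ring
          rw [hsum, Complex.exp_int_mul_two_pi_mul_I]
  -- Step 3: the relation over all roots in ℂ
  have hrelR : ∏ z ∈ R, z ^ (m z) = 1 := by
    rw [← Finset.prod_filter_mul_prod_filter_not R (fun z => 0 < z.im)]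
    have hP1 : ∏ z ∈ R.filter (fun z => 0 < z.im), z ^ (m z)
        = ∏ z ∈ S, z ^ (k z) := by
      refine Finset.prod_congr rfl fun z hz => ?_
      rw [hmdef]
      simp only [if_pos (Finset.mem_filter.mp hz).2]
    have hP2 : ∏ z ∈ (R.filter (fun z => ¬ 0 < z.im)), z ^ (m z)
        = ∏ z ∈ S, ((starRingEnd ℂ) z) ^ (- k z) := by
      rw [← Finset.prod_filter_mul_prod_filter_not
        (R.filter (fun z => ¬ 0 < z.im)) (fun z => z.im < 0)]
      have hP3 : ∏ z ∈ ((R.filter (fun z => ¬ 0 < z.im)).filter (fun z => ¬ z.im < 0)),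
          z ^ (m z) = 1 := by
        refine Finset.prod_eq_one fun z hz => ?_
        obtain ⟨hz1, hz2⟩ := Finset.mem_filter.mp hz
        obtain ⟨_, hz3⟩ := Finset.mem_filter.mp hz1
        rw [hmdef]
        simp only [if_neg hz3, if_neg hz2, zpow_zero]
      rw [hP3, mul_one]
      refine Finset.prod_nbij' (fun z => (starRingEnd ℂ) z) (fun z => (starRingEnd ℂ) z)
        ?_ ?_ ?_ ?_ ?_
      · intro z hz
        obtain ⟨hz1, hz2⟩ := Finset.mem_filter.mp hz
        obtain ⟨hz3, _⟩ := Finset.mem_filter.mp hz1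
        refine Finset.mem_filter.mpr ⟨hconjR z hz3, ?_⟩
        simpa [Complex.conj_im] using hz2
      · intro z hz
        obtain ⟨hz1, hz2⟩ := Finset.mem_filter.mp hz
        refine Finset.mem_filter.mpr ⟨Finset.mem_filter.mpr ⟨hconjR z hz1, ?_⟩, ?_⟩
        · simp only [Complex.conj_im]
          intro hc
          exact absurd (by linarith : z.im ≤ 0) (not_le.mpr hz2)
        · simpa [Complex.conj_im] using hz2
      · intro z _; simp
      · intro z _; simp
      · intro z hz
        obtain ⟨hz1, hz2⟩ := Finset.mem_filter.mp hz
        rw [hmdef]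
        simp only [Complex.conj_conj]
        rw [if_neg (Finset.mem_filter.mp hz1).2, if_pos hz2]
    rw [hP1, hP2, ← Finset.prod_mul_distrib]
    rw [← hrelS]
    refine Finset.prod_congr rfl fun z hz => ?_
    have hz0 : z ≠ 0 := hR0 z (Finset.mem_filter.mp hz).1
    have hcz0 : (starRingEnd ℂ) z ≠ 0 := by simpa using hz0
    rw [div_zpow, zpow_neg, div_eq_mul_inv]
  -- Step 4: transfer the relation to the splitting field
  have hrelT : ∏ w ∈ T, w ^ (n w) = 1 := by
    apply hinj
    rw [map_one, map_prod]
    have h1 : ∀ w ∈ T, ι (w ^ (n w)) = (ι w) ^ (n w) := fun w _ =>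
      map_zpow₀ ι w (n w)
    rw [Finset.prod_congr rfl h1]
    rw [← hrelR]
    refine Finset.prod_nbij (fun w => ι w) hTR
      (fun a _ b _ hab => hinj hab)
      (fun z hz => by
        obtain ⟨w, hw, hwz⟩ := hsurj z hz
        exact ⟨w, hw, hwz⟩)
      (fun w hw => by rw [hndef])
  -- Step 5: for every automorphism, the log-relation holds
  have hGal : ∀ σ : K ≃ₐ[ℚ] K,
      ∑ w ∈ T, ((n (σ w)) : ℝ) * Real.log (‖ι w‖) = 0 := by
    intro σ
    have hσT : ∀ w ∈ T, σ w ∈ T := by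
      intro w hw
      rw [hmemT] at hw ⊢
      rw [aeval_algHom_apply σ w p, hw, map_zero]
    have hσsymmT : ∀ w ∈ T, σ.symm w ∈ T := by
      intro w hw
      rw [hmemT] at hw ⊢
      rw [aeval_algHom_apply σ.symm w p, hw, map_zero]
    have hprod : ∏ w ∈ T, w ^ (n (σ w)) = 1 := by
      have h1 : ∏ w ∈ T, w ^ (n (σ w)) = ∏ v ∈ T, (σ.symm v) ^ (n v) := by
        refine Finset.prod_nbij' (fun w => σ w) (fun v => σ.symm v)
          hσT hσsymmT (fun w _ => σ.symm_apply_apply w) (fun v _ => σ.apply_symm_apply v)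
          (fun w _ => by rw [σ.symm_apply_apply])
      rw [h1]
      have h2 : ∀ v ∈ T, (σ.symm v) ^ (n v) = σ.symm (v ^ (n v)) := fun v _ =>
        (map_zpow₀ σ.symm v (n v)).symm
      rw [Finset.prod_congr rfl h2, ← map_prod, hrelT, map_one]
    have habs1 : ∏ w ∈ T, (‖ι w‖) ^ (n (σ w)) = 1 := by
      have h1 := congrArg (fun x => ‖ι x‖) hprod
      simp only [map_one, map_prod, norm_one, norm_prod] at h1
      rw [← h1]
      refine Finset.prod_congr rfl fun w _ => ?_
      rw [map_zpow₀ ι, norm_zpow]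
    have hne : ∀ w ∈ T, (‖ι w‖) ^ (n (σ w)) ≠ 0 := by
      intro w hw
      exact zpow_ne_zero _ (norm_ne_zero_iff.mpr (hR0 (ι w) (hTR w hw)))
    have h2 := congrArg Real.log habs1
    rw [Real.log_prod hne, Real.log_one] at h2
    rw [← h2]
    refine Finset.sum_congr rfl fun w _ => ?_
    rw [Real.log_zpow]
  -- Step 6: the total log is nonnegative (integrality of the norm)
  have hL0 : 0 ≤ ∑ w ∈ T, Real.log (‖ι w‖) := by
    have hprodR : ∏ w ∈ T, ‖ι w‖ = ‖∏ z ∈ R, z‖ := by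
      rw [norm_prod]
      refine Finset.prod_nbij (fun w => ι w) hTR
        (fun a _ b _ hab => hinj hab)
        (fun z hz => by
          obtain ⟨w, hw, hwz⟩ := hsurj z hz
          exact ⟨w, hw, hwz⟩)
        (fun w hw => rfl)
    have hprodroots : ∏ z ∈ R, z = (p.aroots ℂ).prod := by
      rw [hRdef, Finset.prod_eq_multiset_prod, Multiset.toFinset_val,
        Multiset.dedup_eq_self.mpr hndC, Multiset.map_id']
    -- compute via the constant coefficient
    have hsplitid : (p.map (algebraMap ℚ ℂ)).Splits :=
      hsplit
    have hcoeff : (p.map (algebraMap ℚ ℂ)).coeff 0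
        = (-1) ^ (p.map (algebraMap ℚ ℂ)).natDegree * (p.aroots ℂ).prod :=
      hsplitid.coeff_zero_eq_prod_roots_of_monic (hmonic.map _)
    have habsprod : ‖(p.aroots ℂ).prod‖
        = ‖(algebraMap ℚ ℂ) (p.coeff 0)‖ := by
      have h1 : (p.map (algebraMap ℚ ℂ)).coeff 0 = (algebraMap ℚ ℂ) (p.coeff 0) :=
        coeff_map _ 0
      rw [h1] at hcoeff
      have := congrArg norm hcoeff
      rw [norm_mul, norm_pow] at this
      rw [norm_neg, norm_one, one_pow, one_mul] at this
      exact this.symm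
    -- the constant coefficient is a nonzero integer
    have hpZ : p = (minpoly ℤ β).map (algebraMap ℤ ℚ) :=
      minpoly.isIntegrallyClosed_eq_field_fractions' ℚ hβZ
    have hcoeffZ : p.coeff 0 = ((minpoly ℤ β).coeff 0 : ℚ) := by
      rw [hpZ, coeff_map]; rfl
    set c : ℤ := (minpoly ℤ β).coeff 0 with hcdef
    have hc0 : c ≠ 0 := by
      intro hc
      rw [hcoeffZ, hc] at hcoeff0
      exact hcoeff0 (by norm_num)
    have hc1 : (1:ℝ) ≤ |(c:ℝ)| := by
      exact_mod_cast Int.one_le_abs hc0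
    have habsc : ‖(algebraMap ℚ ℂ) (p.coeff 0)‖ = |(c:ℝ)| := by
      rw [hcoeffZ]
      have : ((algebraMap ℚ ℂ) ((c:ℚ))) = ((c:ℝ) : ℂ) := by push_cast; rfl
      rw [this, Complex.norm_real, Real.norm_eq_abs]
    have hlogsum : ∑ w ∈ T, Real.log (‖ι w‖)
        = Real.log (∏ w ∈ T, ‖ι w‖) := by
      rw [Real.log_prod]
      intro w hw
      exact norm_ne_zero_iff.mpr (hR0 (ι w) (hTR w hw))
    rw [hlogsum, hprodR, hprodroots, habsprod, habsc]
    exact Real.log_nonneg hc1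
  -- Step 7: logs of non-β roots are negative
  have hLneg : ∀ w ∈ T, w ≠ wβ → Real.log (‖ι w‖) < 0 := by
    intro w hw hne
    have h1 : ι w ≠ (β:ℂ) := by
      intro hc
      exact hne (hinj (by rw [hc, hwβ]))
    have h2 : ‖ι w‖ < 1 := habs (ι w) (hTR w hw) h1
    have h3 : 0 < ‖ι w‖ :=
      norm_pos_iff.mpr (hR0 (ι w) (hTR w hw))
    exact Real.log_neg h3 h2
  have hnwβ : n wβ = 0 := by
    rw [hndef, hmdef]
    simp only [hwβ]
    norm_num
  -- Step 8: transitivity of the Galois action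
  have htrans : ∀ w0 ∈ T, ∃ σ : K ≃ₐ[ℚ] K, σ wβ = w0 := by
    intro w0 hw0
    have h1 : minpoly ℚ w0 = minpoly ℚ wβ := by
      rw [← minpoly.eq_of_irreducible hirr ((hmemT w0).mp hw0),
        ← minpoly.eq_of_irreducible hirr ((hmemT wβ).mp hwβT)]
    haveI : Normal ℚ K := Polynomial.SplittingField.instNormal p
    obtain ⟨σ, hσ⟩ := (Normal.minpoly_eq_iff_mem_orbit (F := ℚ) (E := K)).mp h1
    exact ⟨σ, hσ⟩
  -- Step 9: all exponents vanish
  have hzero : ∀ w ∈ T, n w = 0 := by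
    have hub : ∀ w ∈ T, n w ≤ 0 := by
      by_contra hcon
      push_neg at hcon
      obtain ⟨w', hw'T, hw'⟩ := hcon
      obtain ⟨w0, hw0T, hmax⟩ := T.exists_max_image n ⟨wβ, hwβT⟩
      have hM : 0 < n w0 := lt_of_lt_of_le hw' (hmax w' hw'T)
      obtain ⟨σ, hσ⟩ := htrans w0 hw0T
      have hσ' : σ wβ = w0 := hσ
      have hσT : ∀ w ∈ T, σ w ∈ T := by
        intro w hw
        rw [hmemT] at hw ⊢
        rw [aeval_algHom_apply σ w p, hw, map_zero]
      have hall := aux_all_eq_max T (fun w => Real.log (‖ι w‖))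
        (fun w => n (σ w)) (n w0) wβ hwβT hL0 hLneg
        (fun w hw => hmax (σ w) (hσT w hw))
        (by show n (σ wβ) = n w0; rw [hσ']) (le_of_lt hM) (hGal σ)
      have h2 := hall (σ.symm wβ) (by
        rw [hmemT]
        rw [aeval_algHom_apply σ.symm wβ p, (hmemT wβ).mp hwβT, map_zero])
      have h3 : n wβ = n w0 := by
        have h4 : σ (σ.symm wβ) = wβ := σ.apply_symm_apply wβ
        calc n wβ = n (σ (σ.symm wβ)) := by rw [h4]
          _ = n w0 := h2
      omega
    have hlb : ∀ w ∈ T, 0 ≤ n w := by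
      by_contra hcon
      push_neg at hcon
      obtain ⟨w', hw'T, hw'⟩ := hcon
      obtain ⟨w1, hw1T, hmin⟩ := T.exists_min_image n ⟨wβ, hwβT⟩
      have hM : 0 < -(n w1) := by
        have := hmin w' hw'T
        omega
      obtain ⟨σ, hσ⟩ := htrans w1 hw1T
      have hσ' : σ wβ = w1 := hσ
      have hσT : ∀ w ∈ T, σ w ∈ T := by
        intro w hw
        rw [hmemT] at hw ⊢
        rw [aeval_algHom_apply σ w p, hw, map_zero]
      have hsum' : ∑ w ∈ T, ((-(n (σ w)) : ℤ) : ℝ) * Real.log (‖ι w‖) = 0 := by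
        have h1 := hGal σ
        rw [← neg_eq_zero, ← Finset.sum_neg_distrib] at h1
        rw [← h1]
        refine Finset.sum_congr rfl fun w _ => ?_
        push_cast
        ring
      have hall := aux_all_eq_max T (fun w => Real.log (‖ι w‖))
        (fun w => -(n (σ w))) (-(n w1)) wβ hwβT hL0 hLneg
        (fun w hw => by show -(n (σ w)) ≤ -(n w1); have := hmin (σ w) (hσT w hw); omega)
        (by show -(n (σ wβ)) = -(n w1); rw [hσ']) (le_of_lt hM) hsum'
      have h2 := hall (σ.symm wβ) (by
        rw [hmemT]
        rw [aeval_algHom_apply σ.symm wβ p, (hmemT wβ).mp hwβT, map_zero])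
      have h3 : -(n wβ) = -(n w1) := by
        have h4 : σ (σ.symm wβ) = wβ := σ.apply_symm_apply wβ
        calc -(n wβ) = -(n (σ (σ.symm wβ))) := by rw [h4]
          _ = -(n w1) := h2
      omega
    intro w hw
    exact le_antisymm (hub w hw) (hlb w hw)
  -- Conclusion
  have hkS : ∀ z ∈ S, k z = 0 := by
    intro z hz
    obtain ⟨w, hwT, hwz⟩ := hsurj z (Finset.mem_filter.mp hz).1
    have h1 := hzero w hwT
    rw [hndef, hmdef] at h1
    simp only [hwz] at h1
    rw [if_pos (Finset.mem_filter.mp hz).2] at h1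
    exact h1
  constructor
  · have h1 : ∑ z ∈ S, (k z : ℝ) * (Complex.arg z / (2 * Real.pi)) = 0 := by
      refine Finset.sum_eq_zero fun z hz => ?_
      rw [hkS z hz]
      norm_num
    rw [h1, add_zero] at h
    exact_mod_cast h
  · exact hkS

end
end

section
/- Let β be a cubic Pisot unit. For every integer i ≥ 1, either T_β^i(1) = 0 or T_β^i(1) is irrational, where T_β^i(1) is the i-th iterate of the map t ↦ βt − ⌊βt⌋ starting at 1. -/
open Polynomial

noncomputable section

theorem statement7 (β : ℝ) (hpu : IsPisotUnit β)
    (hdeg : (minpoly ℚ β).natDegree = 3) (i : ℕ) (hi : 1 ≤ i) :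
    (betaT β)^[i] 1 = 0 ∨ Irrational ((betaT β)^[i] 1) := by
  have hβ : IsIntegral ℤ β := hpu.1.2.1
  have hint : ∀ n : ℕ, IsIntegral ℤ ((betaT β)^[n] 1) := by
    intro n
    induction n with
    | zero => simpa using isIntegral_one
    | succ n ih =>
      rw [Function.iterate_succ_apply']
      have h1 : IsIntegral ℤ (β * (betaT β)^[n] 1) := hβ.mul ih
      have h2 : IsIntegral ℤ ((⌊β * (betaT β)^[n] 1⌋ : ℝ)) := by
        have := isIntegral_algebraMap (R := ℤ) (A := ℝ) (x := ⌊β * (betaT β)^[n] 1⌋)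
        simpa using this
      exact h1.sub h2
  by_contra hcon
  push_neg at hcon
  obtain ⟨hne, hrat⟩ := hcon
  obtain ⟨q, hq⟩ := not_not.mp hrat
  -- q is a rational which is integral over ℤ, hence an integer
  have hqInt : IsIntegral ℤ q := by
    have : IsIntegral ℤ (algebraMap ℚ ℝ q) := by
      rw [show algebraMap ℚ ℝ q = (q : ℝ) from rfl, hq]; exact hint i
    exact (isIntegral_algebraMap_iff ((algebraMap ℚ ℝ).injective)).mp this
  obtain ⟨z, hz⟩ := IsIntegrallyClosed.isIntegral_iff.mp hqInt
  rw [eq_intCast] at hz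
  -- bounds: for i ≥ 1, the iterate lies in [0,1)
  obtain ⟨j, rfl⟩ : ∃ j, i = j + 1 := ⟨i - 1, (Nat.succ_pred_eq_of_pos hi).symm⟩
  have hfr : (betaT β)^[j + 1] 1 = Int.fract (β * (betaT β)^[j] 1) := by
    rw [Function.iterate_succ_apply']; rfl
  have h0 : (0 : ℝ) ≤ (betaT β)^[j + 1] 1 := by rw [hfr]; exact Int.fract_nonneg _
  have h1 : (betaT β)^[j + 1] 1 < 1 := by rw [hfr]; exact Int.fract_lt_one _
  rw [← hq] at h0 h1 hne
  rw [← hz] at h0 h1 hne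
  have hz0 : (0:ℝ) ≤ (z : ℝ) := by exact_mod_cast h0
  have hz1 : ((z : ℝ)) < 1 := by exact_mod_cast h1
  have : z = 0 := by exact_mod_cast le_antisymm (by exact_mod_cast Int.lt_add_one_iff.mp (by exact_mod_cast hz1)) (by exact_mod_cast hz0)
  apply hne
  rw [this]; norm_num

end
end

section
/- Let β be a cubic Pisot unit with non-real Galois conjugates and let σ : ℚ(β) → ℂ be a field embedding with σ(β) ∉ ℝ. If a : ℤ → ℤ is a Ξ(β)-representation of σ(x) for some x ∈ ℚ(β), then its left tail is eventually periodic: there exist an integer p ≥ 1 and an integer N ≥ 0 such that a_{−n−p} = a_{−n} for every n ≥ N. -/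
open Polynomial

noncomputable section

lemma aux_eventually_periodic {α : Type*} (w : ℕ → α)
    (hfin : (Set.range w).Finite) (M : ℕ)
    (H : ∀ m m', M ≤ m → M ≤ m' → w (m+1) = w (m'+1) → w m = w m') :
    ∃ p : ℕ, 1 ≤ p ∧ ∃ N : ℕ, ∀ m, N ≤ m → w (m + p) = w m := by
  classical
  set E : Set α := {v | {m | w m = v}.Infinite} with hE
  have hEfin : E.Finite := hfin.subset (by
    rintro v hv
    obtain ⟨m, hm⟩ := hv.nonempty
    exact ⟨m, hm⟩)
  have hbad : {m | w m ∉ E}.Finite := by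
    have hsub : {m | w m ∉ E} ⊆ ⋃ v ∈ (Set.range w) \ E, w ⁻¹' {v} := by
      intro m hm
      simp only [Set.mem_iUnion]
      exact ⟨w m, ⟨⟨m, rfl⟩, hm⟩, rfl⟩
    refine Set.Finite.subset (Set.Finite.biUnion (hfin.subset Set.diff_subset) ?_) hsub
    rintro v ⟨-, hv⟩
    exact Set.not_infinite.mp hv
  obtain ⟨M₀', hM₀'⟩ := hbad.bddAbove
  set M₁ : ℕ := max (M₀' + 1) (M + 1) with hM₁def
  have hgood : ∀ m, M₁ ≤ m → w m ∈ E := by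
    intro m hm
    by_contra h
    have := hM₀' h
    omega
  -- backward map
  set f : α → α := fun v => if h : ∃ k, M ≤ k ∧ w (k+1) = v then w h.choose else v with hfdef
  have hf : ∀ k, M ≤ k → f (w (k+1)) = w k := by
    intro k hk
    have h : ∃ k', M ≤ k' ∧ w (k'+1) = w (k+1) := ⟨k, hk, rfl⟩
    simp only [hfdef, dif_pos h]
    exact H h.choose k h.choose_spec.1 hk h.choose_spec.2
  have hmaps : Set.MapsTo f E E := by
    intro v hv
    have hA : ({m | w m = v} \ Set.Iio M₁).Infinite := hv.diff (Set.finite_Iio M₁)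
    have himg : (fun m => m - 1) '' ({m | w m = v} \ Set.Iio M₁) ⊆ {k | w k = f v} := by
      rintro k ⟨m, ⟨hmv, hmM⟩, rfl⟩
      simp only [Set.mem_Iio, not_lt] at hmM
      have h1 : M ≤ m - 1 := by omega
      have h2 : (m - 1) + 1 = m := by omega
      have := hf (m - 1) h1
      rw [h2, hmv] at this
      exact this.symm
    have hinj : Set.InjOn (fun m => m - 1) ({m | w m = v} \ Set.Iio M₁) := by
      rintro m ⟨-, hm⟩ m' ⟨-, hm'⟩ h
      simp only [Set.mem_Iio, not_lt] at hm hm'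
      simp only at h
      omega
    exact Set.Infinite.mono himg (hA.image hinj)
  have hsurj : Set.SurjOn f E E := by
    intro v hv
    obtain ⟨m, hmv, hmM⟩ := (hv.diff (Set.finite_Iio M₁)).nonempty
    simp only [Set.mem_Iio, not_lt] at hmM
    refine ⟨w (m+1), hgood (m+1) (by omega), ?_⟩
    rw [hf m (by omega), hmv]
  have hbij := (hEfin.surjOn_iff_bijOn_of_mapsTo hmaps).mp hsurj
  have hinjE := hbij.injOn
  -- forward determinism above M₁
  have hfwd : ∀ m m', M₁ ≤ m → M₁ ≤ m' → w m = w m' → w (m+1) = w (m'+1) := by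
    intro m m' hm hm' h
    have h1 : f (w (m+1)) = f (w (m'+1)) := by
      rw [hf m (by omega), hf m' (by omega), h]
    exact hinjE (hgood (m+1) (by omega)) (hgood (m'+1) (by omega)) h1
  -- pigeonhole
  have : ∃ k k' : ℕ, k ≠ k' ∧ w (M₁ + k) = w (M₁ + k') := by
    have : ¬ Function.Injective (fun k : ℕ => (⟨w (M₁ + k), hfin.mem_toFinset.mpr ⟨M₁ + k, rfl⟩⟩ :
        hfin.toFinset)) := by
      intro hinj
      exact Set.infinite_range_of_injective hinj (Set.toFinite _)
    simp only [Function.Injective, not_forall] at this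
    obtain ⟨k, k', hkk', hne⟩ := this
    exact ⟨k, k', hne, congrArg Subtype.val hkk'⟩
  obtain ⟨k, k', hne, heq⟩ := this
  rcases Nat.lt_or_ge k k' with hlt | hge
  case _ =>
    refine ⟨k' - k, by omega, M₁ + k, ?_⟩
    have key : ∀ j, w (M₁ + k + j + (k' - k)) = w (M₁ + k + j) := by
      intro j
      induction j with
      | zero =>
        have : M₁ + k + 0 + (k' - k) = M₁ + k' := by omega
        rw [this]
        simpa using heq.symm
      | succ j ih =>
        have e1 : M₁ + k + (j+1) + (k' - k) = (M₁ + k + j + (k' - k)) + 1 := by omega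
        have e2 : M₁ + k + (j+1) = (M₁ + k + j) + 1 := by omega
        rw [e1, e2]
        exact hfwd _ _ (by omega) (by omega) ih
    intro m hm
    have : ∃ j, m = M₁ + k + j := ⟨m - (M₁ + k), by omega⟩
    obtain ⟨j, rfl⟩ := this
    exact key j
  case _ =>
    have hlt : k' < k := by omega
    refine ⟨k - k', by omega, M₁ + k', ?_⟩
    have key : ∀ j, w (M₁ + k' + j + (k - k')) = w (M₁ + k' + j) := by
      intro j
      induction j with
      | zero =>
        have : M₁ + k' + 0 + (k - k') = M₁ + k := by omega
        rw [this]
        simpa using heq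
      | succ j ih =>
        have e1 : M₁ + k' + (j+1) + (k - k') = (M₁ + k' + j + (k - k')) + 1 := by omega
        have e2 : M₁ + k' + (j+1) = (M₁ + k' + j) + 1 := by omega
        rw [e1, e2]
        exact hfwd _ _ (by omega) (by omega) ih
    intro m hm
    obtain ⟨j, rfl⟩ : ∃ j, m = M₁ + k' + j := ⟨m - (M₁ + k'), by omega⟩
    exact key j

def Rseq (β : ℝ) (a : ℤ → ℤ) (m : ℕ) : ℝ :=
  ∑' j : ℕ, (a (-(m : ℤ) + j + 1) : ℝ) * β ^ (-(j : ℤ) - 1)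

def Zseq (lam : ℂ) (a : ℤ → ℤ) (m : ℕ) : ℂ :=
  ∑' j : ℕ, (a (-(m : ℤ) - j) : ℂ) * lam ^ j

def Wseq (β : ℝ) (a : ℤ → ℤ) (x y : Qbeta β) : ℕ → Qbeta β :=
  fun m => Nat.rec (x - y) (fun m wm => (wm - (a (-(m : ℤ)) : Qbeta β)) * (genβ β)⁻¹) m

lemma Wseq_zero (β : ℝ) (a : ℤ → ℤ) (x y : Qbeta β) : Wseq β a x y 0 = x - y := rfl

lemma Wseq_succ (β : ℝ) (a : ℤ → ℤ) (x y : Qbeta β) (m : ℕ) :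
    Wseq β a x y (m + 1) = (Wseq β a x y m - (a (-(m : ℤ)) : Qbeta β)) * (genβ β)⁻¹ := rfl

section series

variable {β : ℝ} {a : ℤ → ℤ} {D : ℝ} (hD : ∀ n : ℤ, |(a n : ℝ)| ≤ D)

lemma summ_R (hβ : 1 < β) (hD : ∀ n : ℤ, |(a n : ℝ)| ≤ D) (k : ℤ) :
    Summable (fun j : ℕ => (a (k + j + 1) : ℝ) * β ^ (-(j : ℤ) - 1)) := by
  have hβ0 : (0:ℝ) < β := lt_trans one_pos hβ
  have hinv0 : (0:ℝ) ≤ β⁻¹ := inv_nonneg.mpr hβ0.le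
  have hinv1 : β⁻¹ < 1 := inv_lt_one_of_one_lt₀ hβ
  refine Summable.of_norm_bounded (g := fun j => (D * β⁻¹) * β⁻¹ ^ j)
    ((summable_geometric_of_lt_one hinv0 hinv1).mul_left _) (fun j => ?_)
  have hpow : β ^ (-(j : ℤ) - 1) = β⁻¹ * β⁻¹ ^ j := by
    rw [show (-(j:ℤ) - 1) = -(((j+1 : ℕ) : ℤ)) by push_cast; ring, zpow_neg, zpow_natCast,
      ← inv_pow, pow_succ']
  show ‖(a (k + j + 1) : ℝ) * β ^ (-(j : ℤ) - 1)‖ ≤ D * β⁻¹ * β⁻¹ ^ j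
  rw [norm_mul, hpow]
  have h1 : ‖(a (k + j + 1) : ℝ)‖ ≤ D := hD _
  have h2 : ‖β⁻¹ * β⁻¹ ^ j‖ = β⁻¹ * β⁻¹ ^ j := by
    rw [Real.norm_eq_abs, abs_of_nonneg (by positivity)]
  rw [h2]
  calc ‖(a (k + j + 1) : ℝ)‖ * (β⁻¹ * β⁻¹ ^ j) ≤ D * (β⁻¹ * β⁻¹ ^ j) :=
        mul_le_mul_of_nonneg_right h1 (by positivity)
    _ = D * β⁻¹ * β⁻¹ ^ j := by ring

lemma summ_R' (hβ : 1 < β) (hD : ∀ n : ℤ, |(a n : ℝ)| ≤ D) (m : ℕ) :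
    Summable (fun j : ℕ => (a (-(m : ℤ) + j + 1) : ℝ) * β ^ (-(j : ℤ) - 1)) :=
  summ_R hβ hD (-(m : ℤ))

lemma Rseq_nonneg (hβ : 1 < β) (hdig : ∀ n : ℤ, 0 ≤ a n) (m : ℕ) : 0 ≤ Rseq β a m := by
  refine tsum_nonneg (fun j => mul_nonneg ?_ ?_)
  · exact_mod_cast hdig _
  · positivity

lemma Rseq_rec (hβ : 1 < β) (hD : ∀ n : ℤ, |(a n : ℝ)| ≤ D) (m : ℕ) :
    Rseq β a (m + 1) = β⁻¹ * ((a (-(m : ℤ)) : ℝ) + Rseq β a m) := by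
  have hβ0 : β ≠ 0 := by positivity
  rw [Rseq, (summ_R' hβ hD (m+1)).tsum_eq_zero_add]
  have e0 : (-(↑(m+1) : ℤ) + (0:ℕ) + 1) = -(m:ℤ) := by push_cast; ring
  have t0 : (a (-(↑(m+1) : ℤ) + (0:ℕ) + 1) : ℝ) * β ^ (-((0:ℕ):ℤ) - 1)
      = β⁻¹ * (a (-(m:ℤ)) : ℝ) := by
    rw [e0]
    norm_num
    ring
  have t1 : ∀ j : ℕ, (a (-(↑(m+1) : ℤ) + (↑(j+1) : ℤ) + 1) : ℝ) * β ^ (-((↑(j+1):ℕ) : ℤ) - 1)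
      = β⁻¹ * ((a (-(m:ℤ) + j + 1) : ℝ) * β ^ (-(j:ℤ) - 1)) := by
    intro j
    have e1 : (-(↑(m+1) : ℤ) + (↑(j+1) : ℤ) + 1) = -(m:ℤ) + j + 1 := by push_cast; ring
    have e2 : (-((↑(j+1):ℕ) : ℤ) - 1) = -1 + (-(j:ℤ) - 1) := by push_cast; ring
    rw [e1, e2, zpow_add₀ hβ0, zpow_neg_one]
    ring
  rw [t0, tsum_congr t1, tsum_mul_left]
  rw [Rseq]
  ring


lemma summ_Z {lam : ℂ} (hlam : ‖lam‖ < 1) (hD : ∀ n : ℤ, |(a n : ℝ)| ≤ D) (m : ℕ) :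
    Summable (fun j : ℕ => (a (-(m : ℤ) - j) : ℂ) * lam ^ j) := by
  refine Summable.of_norm_bounded (g := fun j => D * ‖lam‖ ^ j)
    ((summable_geometric_of_lt_one (norm_nonneg _) hlam).mul_left _) (fun j => ?_)
  show ‖(a (-(m : ℤ) - j) : ℂ) * lam ^ j‖ ≤ D * ‖lam‖ ^ j
  rw [norm_mul, norm_pow]
  have h1 : ‖((a (-(m : ℤ) - j) : ℤ) : ℂ)‖ ≤ D := by
    rw [Complex.norm_intCast]
    exact_mod_cast hD _
  exact mul_le_mul_of_nonneg_right h1 (by positivity)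

lemma Zseq_rec {lam : ℂ} (hlam : ‖lam‖ < 1) (hD : ∀ n : ℤ, |(a n : ℝ)| ≤ D) (m : ℕ) :
    Zseq lam a m = (a (-(m : ℤ)) : ℂ) + lam * Zseq lam a (m + 1) := by
  rw [Zseq, (summ_Z hlam hD m).tsum_eq_zero_add]
  have t0 : (a (-(m : ℤ) - ((0:ℕ):ℤ)) : ℂ) * lam ^ (0:ℕ) = (a (-(m : ℤ)) : ℂ) := by
    norm_num
  have t1 : ∀ j : ℕ, (a (-(m : ℤ) - ((j+1 : ℕ):ℤ)) : ℂ) * lam ^ (j+1)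
      = lam * ((a (-((m+1 : ℕ) : ℤ) - j) : ℂ) * lam ^ j) := by
    intro j
    have e1 : (-(m : ℤ) - ((j+1 : ℕ):ℤ)) = -((m+1 : ℕ) : ℤ) - j := by push_cast; ring
    rw [e1, pow_succ]
    ring
  rw [t0, tsum_congr t1, tsum_mul_left, Zseq]

lemma Zseq_bound {lam : ℂ} (hlam : ‖lam‖ < 1) (hD : ∀ n : ℤ, |(a n : ℝ)| ≤ D) (m : ℕ) :
    ‖Zseq lam a m‖ ≤ D * (1 - ‖lam‖)⁻¹ := by
  have hD0 : 0 ≤ D := le_trans (abs_nonneg _) (hD 0)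
  have hsn : Summable (fun j : ℕ => ‖(a (-(m : ℤ) - j) : ℂ) * lam ^ j‖) :=
    (summ_Z hlam hD m).norm
  calc ‖Zseq lam a m‖ ≤ ∑' j : ℕ, ‖(a (-(m : ℤ) - j) : ℂ) * lam ^ j‖ :=
        norm_tsum_le_tsum_norm hsn
    _ ≤ ∑' j : ℕ, D * ‖lam‖ ^ j := by
        refine Summable.tsum_le_tsum (fun j => ?_) hsn
          ((summable_geometric_of_lt_one (norm_nonneg _) hlam).mul_left _)
        rw [norm_mul, norm_pow, Complex.norm_intCast]
        exact mul_le_mul_of_nonneg_right (by exact_mod_cast hD _) (by positivity)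
    _ = D * (1 - ‖lam‖)⁻¹ := by
        rw [tsum_mul_left, tsum_geometric_of_lt_one (norm_nonneg _) hlam]

end series



lemma aux_floor_pos (c t : ℝ) (h0 : 0 ≤ t) (h1 : t < ⌊c⌋ + 1 - c) : ⌊c + t⌋ = ⌊c⌋ := by
  rw [Int.floor_eq_iff]
  constructor
  · linarith [Int.floor_le c]
  · push_cast
    linarith

lemma aux_floor_neg (c t : ℝ) (h0 : t < 0) (h1 : (⌈c⌉ : ℝ) - 1 - c < t) : ⌊c + t⌋ = ⌈c⌉ - 1 := by
  rw [Int.floor_eq_iff]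
  constructor
  · push_cast
    linarith
  · push_cast
    linarith [Int.le_ceil c]

/-- A bi-infinite digit sequence is admissible: digits lie in `{0, …, ⌈β⌉ - 1}` and every
suffix sums to less than `1`. -/
def AdmissibleSeq (β : ℝ) (a : ℤ → ℤ) : Prop :=
  (∀ n : ℤ, 0 ≤ a n ∧ a n ≤ ⌈β⌉ - 1) ∧
    ∀ k : ℤ, (∑' j : ℕ, (a (k + j + 1) : ℝ) * β ^ (-(j : ℤ) - 1)) < 1

/-- `a : ℤ → ℤ` is a `Ξ(β)`-representation of `z ∈ ℂ`. -/
def XiRep (β : ℝ) (σ : Qbeta β →+* ℂ) (z : ℂ) (a : ℤ → ℤ) : Prop :=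
  AdmissibleSeq β a ∧
    ∃ y : Qbeta β, (y : ℝ) ∈ Subring.closure ({β, β⁻¹} : Set ℝ) ∧
      (y : ℝ) = (∑' j : ℕ, (a ((j : ℤ) + 1) : ℝ) * β ^ (-(j : ℤ) - 1)) ∧
      z = (∑' j : ℕ, (a (-(j : ℤ)) : ℂ) * (σ (genβ β)) ^ j) + σ y

theorem statement11 (β : ℝ) (hpu : IsPisotUnit β)
    (hdeg : (minpoly ℚ β).natDegree = 3) (hnr : NonRealConjugates β)
    (σ : Qbeta β →+* ℂ) (hσ : (σ (genβ β)).im ≠ 0)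
    (x : Qbeta β) (a : ℤ → ℤ) (ha : XiRep β σ (σ x) a) :
    ∃ p : ℕ, 1 ≤ p ∧ ∃ N : ℕ, ∀ n : ℕ, N ≤ n →
      a (-(n : ℤ) - (p : ℤ)) = a (-(n : ℤ)) := by
  classical
  obtain ⟨⟨hβ1, hβZint, hconj⟩, hβinvZ⟩ := hpu
  obtain ⟨⟨hdig, hadm⟩, y, hymem, hyeq, hzeq⟩ := ha
  have hβ0 : (0:ℝ) < β := lt_trans one_pos hβ1
  have hβne : β ≠ 0 := ne_of_gt hβ0
  -- digit bound
  set D : ℝ := ((⌈β⌉ : ℤ) : ℝ) with hDdef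
  have hD : ∀ n : ℤ, |(a n : ℝ)| ≤ D := by
    intro n
    have h1 := (hdig n).1
    have h2 := (hdig n).2
    rw [abs_of_nonneg (by exact_mod_cast h1)]
    have h3 : (a n : ℝ) ≤ ((⌈β⌉ - 1 : ℤ) : ℝ) := by exact_mod_cast h2
    have h4 : ((⌈β⌉ - 1 : ℤ) : ℝ) ≤ D := by push_cast; linarith
    linarith
  -- K-level basics
  have hβQ : IsIntegral ℚ β := hβZint.tower_top
  have hgenval : ((genβ β : Qbeta β) : ℝ) = β := rfl
  have hinjKR : Function.Injective (algebraMap (Qbeta β) ℝ) := (algebraMap (Qbeta β) ℝ).injective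
  have halgmap : ∀ v : Qbeta β, algebraMap (Qbeta β) ℝ v = (v : ℝ) := fun v => rfl
  have hgen_ne : genβ β ≠ 0 := by
    intro h
    apply hβne
    have : ((genβ β : Qbeta β) : ℝ) = ((0 : Qbeta β) : ℝ) := by rw [h]
    simpa [hgenval] using this
  have hPgen : aeval (genβ β) (minpoly ℚ β) = 0 := by
    apply hinjKR
    rw [map_zero, ← Polynomial.aeval_algebraMap_apply, halgmap, hgenval, minpoly.aeval]
  have hroot : ∀ φ : (Qbeta β) →+* ℂ, aeval (φ (genβ β)) (minpoly ℚ β) = 0 := by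
    intro φ
    have h := Polynomial.aeval_algHom_apply φ.toRatAlgHom (genβ β) (minpoly ℚ β)
    rw [hPgen, map_zero] at h
    exact h
  -- lambda facts
  set lam : ℂ := σ (genβ β) with hlamdef
  have hlroot : aeval lam (minpoly ℚ β) = 0 := hroot σ
  have hlam_ne_β : lam ≠ ((β:ℝ) : ℂ) := by
    intro h
    apply hσ
    rw [h]
    exact Complex.ofReal_im β
  have habs : ‖lam‖ < 1 := hconj lam hlroot hlam_ne_β
  have hlam1 : ‖lam‖ < 1 := habs
  have hlam0 : lam ≠ 0 := by
    intro h
    apply hσ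
    rw [h]
    rfl
  -- R sequence facts
  have hRlt : ∀ m : ℕ, Rseq β a m < 1 := fun m => hadm (-(m:ℤ))
  have hR0 : ∀ m, 0 ≤ Rseq β a m := Rseq_nonneg hβ1 (fun n => (hdig n).1)
  have hRrec : ∀ m, Rseq β a (m+1) = β⁻¹ * ((a (-(m:ℤ)) : ℝ) + Rseq β a m) :=
    Rseq_rec hβ1 hD
  have hRy : Rseq β a 0 = (y : ℝ) := by
    rw [hyeq, Rseq]
    refine tsum_congr (fun j => ?_)
    congr 2
    push_cast
    ring
  -- W sequence
  have hWs : ∀ m, Wseq β a x y (m+1)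
      = (Wseq β a x y m - (a (-(m:ℤ)) : Qbeta β)) * (genβ β)⁻¹ := fun m => rfl
  have hWrel : ∀ k, Wseq β a x y k
      = Wseq β a x y (k+1) * (genβ β) + (a (-(k:ℤ)) : Qbeta β) := by
    intro k
    rw [hWs k]
    field_simp
    ring
  have hWreal : ∀ m : ℕ, ((Wseq β a x y m : ℝ)) = β ^ (-(m:ℤ)) * (x : ℝ) - Rseq β a m := by
    intro m
    induction m with
    | zero =>
      show ((x - y : Qbeta β) : ℝ) = _
      push_cast
      rw [hRy]
      norm_num
    | succ m ih =>
      rw [hWs m]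
      have hginv : (((genβ β)⁻¹ : Qbeta β) : ℝ) = β⁻¹ := by
        rw [← hgenval]
        exact map_inv₀ ((Qbeta β).toSubfield.subtype) _
      push_cast [hginv]
      rw [ih, hRrec m]
      have hz : β ^ (-((m:ℤ) + 1)) = β ^ (-(m:ℤ)) * β⁻¹ := by
        rw [show (-((m:ℤ)+1)) = -(m:ℤ) + (-1) by ring, zpow_add₀ hβne, zpow_neg_one]
      rw [hz]
      ring
  -- Z sequence
  have hZ0 : Zseq lam a 0 = σ x - σ y := by
    have h1 : Zseq lam a 0 = ∑' j : ℕ, (a (-(j:ℤ)) : ℂ) * lam ^ j := by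
      rw [Zseq]
      refine tsum_congr (fun j => ?_)
      congr 2
      push_cast
      ring
    rw [h1, hzeq]
    ring
  have hZrec : ∀ m, Zseq lam a m = (a (-(m:ℤ)) : ℂ) + lam * Zseq lam a (m+1) :=
    Zseq_rec hlam1 hD
  have hWsig : ∀ m, σ (Wseq β a x y m) = Zseq lam a m := by
    intro m
    induction m with
    | zero =>
      show σ (x - y) = _
      rw [map_sub, hZ0]
    | succ m ih =>
      rw [hWs m, map_mul, map_sub, map_inv₀, map_intCast, ← hlamdef, ih, hZrec m]
      field_simp
      ring
  -- bounds
  have hWrealbound : ∀ m, |(Wseq β a x y m : ℝ)| ≤ |(x:ℝ)| + 1 := by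
    intro m
    rw [hWreal m]
    have hp1 : (0:ℝ) < β ^ (-(m:ℤ)) := zpow_pos hβ0 _
    have hp2 : β ^ (-(m:ℤ)) ≤ 1 := zpow_le_one_of_nonpos₀ hβ1.le (by omega)
    have h1 : |β ^ (-(m:ℤ)) * (x:ℝ)| ≤ |(x:ℝ)| := by
      rw [abs_mul, abs_of_pos hp1]
      nlinarith [abs_nonneg (x:ℝ)]
    have h2 := abs_le.mp h1
    have := hR0 m
    have := hRlt m
    rw [abs_le]
    constructor <;> linarith
  set B : ℝ := D * (1 - ‖lam‖)⁻¹ with hBdef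
  have hZb : ∀ m, ‖Zseq lam a m‖ ≤ B := Zseq_bound hlam1 hD
  -- number field instances
  haveI hfd : FiniteDimensional ℚ (Qbeta β) := IntermediateField.adjoin.finiteDimensional hβQ
  haveI : NumberField (Qbeta β) := ⟨⟩
  -- embedding classification
  have hext : ∀ (φ ψ : (Qbeta β) →+* ℂ), φ (genβ β) = ψ (genβ β) → φ = ψ := by
    intro φ ψ h
    have hpbgen : (IntermediateField.adjoin.powerBasis hβQ).gen = genβ β := by
      apply Subtype.ext
      rfl
    have h2 : φ.toRatAlgHom = ψ.toRatAlgHom :=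
      (IntermediateField.adjoin.powerBasis hβQ).algHom_ext (by rw [hpbgen]; exact h)
    rw [← RingHom.toRatAlgHom_toRingHom φ, ← RingHom.toRatAlgHom_toRingHom ψ, h2]
  have hβC : aeval ((β:ℝ) : ℂ) (minpoly ℚ β) = 0 := by
    have h : algebraMap ℝ ℂ (aeval β (minpoly ℚ β)) = 0 := by
      rw [minpoly.aeval, map_zero]
    rwa [← Polynomial.aeval_algebraMap_apply] at h
  have htri : ∀ z : ℂ, aeval z (minpoly ℚ β) = 0 →
      z = ((β:ℝ):ℂ) ∨ z = lam ∨ z = (starRingEnd ℂ) lam := by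
    intro z hz
    by_contra hcon
    push_neg at hcon
    obtain ⟨h1, h2, h3⟩ := hcon
    set Q := (minpoly ℚ β).map (algebraMap ℚ ℂ) with hQ
    have hQne : Q ≠ 0 := Polynomial.map_ne_zero (minpoly.ne_zero hβQ)
    have hQdeg : Q.natDegree = 3 := by rw [hQ, Polynomial.natDegree_map]; exact hdeg
    have hmem : ∀ u : ℂ, aeval u (minpoly ℚ β) = 0 → u ∈ Q.roots.toFinset := by
      intro u hu
      rw [Multiset.mem_toFinset, Polynomial.mem_roots hQne, Polynomial.IsRoot, hQ,
        Polynomial.eval_map, ← Polynomial.aeval_def]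
      exact hu
    have hconjroot : aeval ((starRingEnd ℂ) lam) (minpoly ℚ β) = 0 :=
      hroot ((starRingEnd ℂ).comp σ)
    have d1 : ((β:ℝ):ℂ) ≠ lam := fun h => hlam_ne_β h.symm
    have d2 : ((β:ℝ):ℂ) ≠ (starRingEnd ℂ) lam := by
      intro h
      apply hσ
      have : ((starRingEnd ℂ) lam).im = 0 := by rw [← h]; exact Complex.ofReal_im β
      rw [Complex.conj_im] at this
      linarith
    have d3 : lam ≠ (starRingEnd ℂ) lam := by
      intro h
      apply hσ
      have := congrArg Complex.im h
      rw [Complex.conj_im] at this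
      linarith
    have hsub : ({z, ((β:ℝ):ℂ), lam, (starRingEnd ℂ) lam} : Finset ℂ) ⊆ Q.roots.toFinset := by
      intro u hu
      simp only [Finset.mem_insert, Finset.mem_singleton] at hu
      rcases hu with rfl | rfl | rfl | rfl
      · exact hmem _ hz
      · exact hmem _ hβC
      · exact hmem _ hlroot
      · exact hmem _ hconjroot
    have hcard : ({z, ((β:ℝ):ℂ), lam, (starRingEnd ℂ) lam} : Finset ℂ).card = 4 := by
      rw [Finset.card_insert_of_notMem (by simp [h1, h2, h3]),
        Finset.card_insert_of_notMem (by simp [d1, d2]),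
        Finset.card_insert_of_notMem (by simp [d3]), Finset.card_singleton]
    have hle1 := Finset.card_le_card hsub
    have hle2 := Multiset.toFinset_card_le Q.roots
    have hle3 := Polynomial.card_roots' Q
    omega
  set Bmax : ℝ := max (|(x:ℝ)| + 1) B with hBmax
  have hφbound : ∀ (φ : (Qbeta β) →+* ℂ) m, ‖φ (Wseq β a x y m)‖ ≤ Bmax := by
    intro φ m
    rcases htri (φ (genβ β)) (hroot φ) with h | h | h
    · have hφ : φ = Complex.ofRealHom.comp (algebraMap (Qbeta β) ℝ) := by
        apply hext
        rw [h]
        rfl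
      rw [hφ]
      have : ‖Complex.ofRealHom ((algebraMap (Qbeta β) ℝ) (Wseq β a x y m))‖
          = |(Wseq β a x y m : ℝ)| := by
        rw [halgmap]
        exact Complex.norm_real _
      rw [RingHom.comp_apply, this]
      exact le_max_of_le_left (hWrealbound m)
    · have hφ : φ = σ := hext _ _ h
      rw [hφ, hWsig m]
      exact le_max_of_le_right (hZb m)
    · have hφ : φ = (starRingEnd ℂ).comp σ := hext _ _ h
      rw [hφ, RingHom.comp_apply, hWsig m, RCLike.norm_conj]
      exact le_max_of_le_right (hZb m)
  -- integrality
  have hxyQint : IsIntegral ℚ (x - y) := IsIntegral.of_finite ℚ _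
  obtain ⟨dm, hdint⟩ := IsIntegral.exists_multiple_integral_of_isLocalization
      (R := ℤ) (nonZeroDivisors ℤ) (x - y) hxyQint
  set d : ℤ := (dm : ℤ) with hd
  have hd0 : d ≠ 0 := nonZeroDivisors.coe_ne_zero dm
  have hdK0 : ((d : ℤ) : Qbeta β) ≠ 0 := Int.cast_ne_zero.mpr hd0
  have hcastint : ∀ e : ℤ, IsIntegral ℤ ((e : Qbeta β)) := by
    intro e
    have h := isIntegral_algebraMap (R := ℤ) (A := Qbeta β) (x := e)
    simpa using h
  have hginvint : IsIntegral ℤ ((genβ β)⁻¹) := by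
    have hmap : algebraMap (Qbeta β) ℝ ((genβ β)⁻¹) = β⁻¹ := by
      rw [map_inv₀, halgmap, hgenval]
    have := (isIntegral_algebraMap_iff hinjKR (R := ℤ) (x := (genβ β)⁻¹)).mp
    rw [hmap] at this
    exact this hβinvZ
  have hVint : ∀ m, IsIntegral ℤ ((d : Qbeta β) * Wseq β a x y m) := by
    intro m
    induction m with
    | zero =>
      have h : (d : Qbeta β) * Wseq β a x y 0 = dm • (x - y) := by
        rw [Submonoid.smul_def, zsmul_eq_mul]
        rfl
      rw [h]
      exact hdint
    | succ m ih =>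
      have h : (d : Qbeta β) * Wseq β a x y (m+1)
          = ((d : Qbeta β) * Wseq β a x y m - ((d * a (-(m:ℤ)) : ℤ) : Qbeta β))
            * (genβ β)⁻¹ := by
        rw [hWs m]
        push_cast
        ring
      rw [h]
      exact ((ih.sub (hcastint _)).mul hginvint)
  have hVbound : ∀ (φ : (Qbeta β) →+* ℂ) m,
      ‖φ ((d : Qbeta β) * Wseq β a x y m)‖ ≤ |(d:ℝ)| * Bmax := by
    intro φ m
    rw [map_mul, norm_mul, map_intCast, Complex.norm_intCast]
    exact mul_le_mul_of_nonneg_left (hφbound φ m) (abs_nonneg _)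
  have hVfin : (Set.range (fun m => (d : Qbeta β) * Wseq β a x y m)).Finite := by
    apply Set.Finite.subset
      (NumberField.Embeddings.finite_of_norm_le (Qbeta β) ℂ (|(d:ℝ)| * Bmax))
    rintro v ⟨m, rfl⟩
    exact ⟨hVint m, fun φ => hVbound φ m⟩
  have hWfin : (Set.range (Wseq β a x y)).Finite := by
    have himg : Set.range (Wseq β a x y) ⊆
        (fun v => ((d : ℤ) : Qbeta β)⁻¹ * v) ''
          (Set.range (fun m => (d : Qbeta β) * Wseq β a x y m)) := by
      rintro v ⟨m, rfl⟩
      refine ⟨(d : Qbeta β) * Wseq β a x y m, ⟨m, rfl⟩, ?_⟩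
      field_simp
    exact ((hVfin.image _).subset himg)
  -- floor formula for digits
  have hfloor : ∀ m : ℕ, a (-(m:ℤ)) = ⌊β * Rseq β a (m+1)⌋ := by
    intro m
    have h : β * Rseq β a (m+1) = (a (-(m:ℤ)) : ℝ) + Rseq β a m := by
      rw [hRrec m, ← mul_assoc, mul_inv_cancel₀ hβne, one_mul]
    rw [h, Int.floor_intCast_add, Int.floor_eq_zero_iff.mpr ⟨hR0 m, hRlt m⟩, add_zero]
  have hformula : ∀ m : ℕ, a (-(m:ℤ)) =
      ⌊(-β * ((Wseq β a x y (m+1) : ℝ))) + β ^ (-(m:ℤ)) * (x:ℝ)⌋ := by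
    intro m
    rw [hfloor m]
    congr 1
    rw [hWreal (m+1)]
    have hz : β * β ^ (-((m+1:ℕ):ℤ)) = β ^ (-(m:ℤ)) := by
      rw [show (-((m+1:ℕ):ℤ)) = -(m:ℤ) + (-1) by push_cast; ring, zpow_add₀ hβne,
        zpow_neg_one]
      field_simp
    linear_combination ((x:ℝ)) * hz
  -- gap and δ
  set gap : Qbeta β → ℝ := fun v =>
    if 0 ≤ (x:ℝ) then (⌊-β * (v : ℝ)⌋ + 1 - (-β * (v : ℝ)))
    else ((-β * (v : ℝ)) - (⌈-β * (v : ℝ)⌉ - 1)) with hgap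
  have hgappos : ∀ v, 0 < gap v := by
    intro v
    rw [hgap]
    simp only []
    split
    · have := Int.lt_floor_add_one (-β * (v : ℝ))
      linarith
    · have := Int.ceil_lt_add_one (-β * (v : ℝ))
      linarith
  set T : Finset ℝ := hWfin.toFinset.image gap with hT
  have hTne : T.Nonempty :=
    ⟨gap (Wseq β a x y 0), Finset.mem_image_of_mem _ (hWfin.mem_toFinset.mpr ⟨0, rfl⟩)⟩
  set δ : ℝ := T.min' hTne with hδ
  have hδpos : 0 < δ := by
    obtain ⟨v, hv, hveq⟩ := Finset.mem_image.mp (T.min'_mem hTne)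
    rw [hδ, ← hveq]
    exact hgappos v
  have hδle : ∀ m : ℕ, δ ≤ gap (Wseq β a x y m) := fun m =>
    T.min'_le _ (Finset.mem_image_of_mem _ (hWfin.mem_toFinset.mpr ⟨m, rfl⟩))
  -- choose M
  have htend : Filter.Tendsto (fun m : ℕ => β ^ (-(m:ℤ)) * (x:ℝ)) Filter.atTop (nhds 0) := by
    have h2 := tendsto_pow_atTop_nhds_zero_of_lt_one (inv_nonneg.mpr hβ0.le)
      (inv_lt_one_of_one_lt₀ hβ1)
    have h3 := h2.mul_const ((x:ℝ))
    rw [zero_mul] at h3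
    refine Filter.Tendsto.congr (fun m => ?_) h3
    rw [zpow_neg, zpow_natCast, inv_pow]
  obtain ⟨M, hM⟩ := Filter.eventually_atTop.mp
    (htend.eventually (Metric.ball_mem_nhds (0:ℝ) hδpos))
  have hMabs : ∀ k, M ≤ k → |β ^ (-(k:ℤ)) * (x:ℝ)| < δ := by
    intro k hk
    have h : dist (β ^ (-(k:ℤ)) * (x:ℝ)) 0 < δ := hM k hk
    rwa [Real.dist_eq, sub_zero] at h
  -- eventual backward determinism
  have hteq : ∀ k : ℕ, M ≤ k → a (-(k:ℤ)) =
      (if 0 ≤ (x:ℝ) then ⌊-β * ((Wseq β a x y (k+1) : ℝ))⌋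
       else ⌈-β * ((Wseq β a x y (k+1) : ℝ))⌉ - 1) := by
    intro k hk
    have htabs := hMabs k hk
    have hg := hδle (k+1)
    rw [hformula k]
    rcases le_or_gt 0 ((x:ℝ)) with hx0 | hx0
    · rw [if_pos hx0]
      rw [hgap] at hg
      simp only [if_pos hx0] at hg
      apply aux_floor_pos
      · exact mul_nonneg (zpow_pos hβ0 _).le hx0
      · have h1 : β ^ (-(k:ℤ)) * (x:ℝ) ≤ |β ^ (-(k:ℤ)) * (x:ℝ)| := le_abs_self _
        linarith
    · rw [if_neg (not_le.mpr hx0)]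
      rw [hgap] at hg
      simp only [if_neg (not_le.mpr hx0)] at hg
      apply aux_floor_neg
      · exact mul_neg_of_pos_of_neg (zpow_pos hβ0 _) hx0
      · have h2 : -|β ^ (-(k:ℤ)) * (x:ℝ)| ≤ β ^ (-(k:ℤ)) * (x:ℝ) := neg_abs_le _
        linarith
  have hH : ∀ m m', M ≤ m → M ≤ m' →
      Wseq β a x y (m+1) = Wseq β a x y (m'+1) → Wseq β a x y m = Wseq β a x y m' := by
    intro m m' hm hm' heq
    have h1 := hteq m hm
    have h2 := hteq m' hm'
    rw [heq] at h1
    have ha_eq : a (-(m:ℤ)) = a (-(m':ℤ)) := by rw [h1, h2]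
    rw [hWrel m, hWrel m', heq, ha_eq]
  obtain ⟨p, hp1, N, hN⟩ := aux_eventually_periodic (Wseq β a x y) hWfin M hH
  refine ⟨p, hp1, N, fun n hn => ?_⟩
  have h1 := hN n hn
  have h2 := hN (n+1) (le_trans hn (Nat.le_succ n))
  have hdig_eq : ∀ k : ℕ, ((a (-(k:ℤ)) : ℤ) : Qbeta β)
      = Wseq β a x y k - Wseq β a x y (k+1) * genβ β := by
    intro k
    rw [hWrel k]
    ring
  have e : (-(n:ℤ) - (p:ℤ)) = -(((n+p : ℕ)):ℤ) := by push_cast; ring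
  rw [e]
  have hcast : ((a (-((n+p:ℕ):ℤ)) : ℤ) : Qbeta β) = ((a (-(n:ℤ)) : ℤ) : Qbeta β) := by
    rw [hdig_eq (n+p), hdig_eq n, h1, show (n+p)+1 = (n+1)+p by ring, h2]
  exact_mod_cast hcast

end
end

section
/- Let β be a cubic Pisot unit with non-real Galois conjugates and let σ : ℚ(β) → ℂ be a field embedding with σ(β) ∉ ℝ. Then there exists a positive integer C such that every z ∈ ℂ belongs to the tile 𝒯(y) for at most C distinct values of y ∈ ℤ[β, β⁻¹] ∩ [0,1). -/
open Polynomial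

noncomputable section

/-- The `n`-th digit (starting from `n = 0` for the digit `b₁`) of the β-expansion of `x`. -/
def betaDigit (β : ℝ) (x : ℝ) (n : ℕ) : ℤ := ⌊β * (betaT β)^[n] x⌋

/-- The bi-infinite digit sequence `(…, 0, 0, a_{-k+1}, …, a_0, b_1, b_2, …)` obtained by
prepending the finite word `w = (a_{-k+1}, …, a_0)` (and then zeros) to the β-expansion
digits of `y`. -/
def extSeq (β : ℝ) (y : ℝ) (w : List ℤ) : ℤ → ℤ := fun n =>
  if 1 ≤ n then betaDigit β y (n - 1).toNat
  else if -(w.length : ℤ) < n then w.getD (n + w.length - 1).toNat 0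
  else 0

/-- The finite word `w = (a_{-k+1}, …, a_0)` is compatible with `y`. -/
def Compatible (β : ℝ) (y : ℝ) (w : List ℤ) : Prop :=
  AdmissibleSeq β (extSeq β y w)

/-- The value `a_{-k+1} β^{k-1} + ⋯ + a_{-1} β + a_0` of a finite digit word. -/
def wordValue (β : ℝ) : List ℤ → ℝ
  | [] => 0
  | d :: rest => (d : ℝ) * β ^ rest.length + wordValue β rest

/-- The tile `𝒯(y)` associated with `y ∈ ℤ[β, β⁻¹] ∩ [0,1)`. -/
def tile (β : ℝ) (σ : Qbeta β →+* ℂ) (y : Qbeta β) : Set ℂ :=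
  (fun z => σ y + z) ''
    closure {z | ∃ w : List ℤ, Compatible β (y : ℝ) w ∧
      ∃ x : Qbeta β, (x : ℝ) = wordValue β w ∧ z = σ x}

-- auxiliary lemmas (to be inserted before the theorem)
/-- Word value over a general ring. -/
def wvGen {R : Type*} [Ring R] (c : R) : List ℤ → R
  | [] => 0
  | d :: rest => (d : R) * c ^ rest.length + wvGen c rest

lemma wvGen_map {R S : Type*} [Ring R] [Ring S] (f : R →+* S) (c : R) (w : List ℤ) :
    f (wvGen c w) = wvGen (f c) w := by
  induction w with
  | nil => simp [wvGen]
  | cons d rest ih => simp [wvGen, ih, map_add, map_mul, map_pow]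

lemma wvGen_real (β : ℝ) (w : List ℤ) : wvGen β w = wordValue β w := by
  induction w with
  | nil => simp [wvGen, wordValue]
  | cons d rest ih => simp [wvGen, wordValue, ih]

lemma wvGen_norm_le {c : ℂ} (hc : ‖c‖ < 1) {D : ℝ} (hD : 0 ≤ D) (w : List ℤ)
    (hw : ∀ d ∈ w, (0:ℤ) ≤ d ∧ (d:ℝ) ≤ D) : ‖wvGen c w‖ ≤ D / (1 - ‖c‖) := by
  have h0 : (0:ℝ) ≤ ‖c‖ := norm_nonneg c
  have h1 : 0 < 1 - ‖c‖ := by linarith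
  have key : ∀ w : List ℤ, (∀ d ∈ w, (0:ℤ) ≤ d ∧ (d:ℝ) ≤ D) →
      ‖wvGen c w‖ ≤ D * ∑ i ∈ Finset.range w.length, ‖c‖ ^ i := by
    intro w
    induction w with
    | nil => intro _; simp [wvGen]
    | cons d rest ih =>
      intro hw
      have hd := hw d List.mem_cons_self
      have hrest := ih (fun x hx => hw x (List.mem_cons_of_mem d hx))
      calc ‖wvGen c (d :: rest)‖ ≤ ‖(d:ℂ) * c ^ rest.length‖ + ‖wvGen c rest‖ :=
            norm_add_le _ _
        _ ≤ D * ‖c‖ ^ rest.length + D * ∑ i ∈ Finset.range rest.length, ‖c‖ ^ i := by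
            apply add_le_add _ hrest
            rw [norm_mul, norm_pow]
            apply mul_le_mul _ le_rfl (by positivity) hD
            rw [Complex.norm_intCast, abs_of_nonneg (by exact_mod_cast hd.1)]
            exact hd.2
        _ = D * ∑ i ∈ Finset.range (d :: rest).length, ‖c‖ ^ i := by
            rw [List.length_cons, Finset.sum_range_succ]; ring
  refine le_trans (key w hw) ?_
  rw [div_eq_mul_inv]
  apply mul_le_mul le_rfl _ (Finset.sum_nonneg fun i _ => by positivity) hD
  have hp : (0:ℝ) ≤ ‖c‖ ^ w.length := by positivity
  rw [geom_sum_eq (ne_of_lt hc)]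
  have e : (‖c‖ ^ w.length - 1)/(‖c‖ - 1) = (1 - ‖c‖ ^ w.length)/(1 - ‖c‖) := by
    rw [← neg_div_neg_eq]; ring_nf
  rw [e, inv_eq_one_div]
  gcongr
  linarith

lemma ringHom_ext' (β : ℝ) (h : IsIntegral ℚ β) (φ ψ : Qbeta β →+* ℂ)
    (hb : φ (genβ β) = ψ (genβ β)) : φ = ψ := by
  let pb := IntermediateField.adjoin.powerBasis h
  have h2 : φ.toRatAlgHom = ψ.toRatAlgHom := by
    apply pb.algHom_ext
    have hg : pb.gen = genβ β := by
      simp only [pb, IntermediateField.adjoin.powerBasis_gen]; rfl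
    rw [hg]; exact hb
  exact congrArg AlgHom.toRingHom h2

lemma gen_image_root (β : ℝ) (h : IsIntegral ℚ β) (ψ : Qbeta β →+* ℂ) :
    aeval (ψ (genβ β)) (minpoly ℚ β) = 0 := by
  have hmin : minpoly ℚ (genβ β) = minpoly ℚ β :=
    (minpoly.algebraMap_eq (algebraMap (Qbeta β) ℝ).injective (genβ β)).symm
  have h0 := minpoly.aeval ℚ (genβ β)
  rw [hmin] at h0
  have h2 := aeval_algHom_apply ψ.toRatAlgHom (genβ β) (minpoly ℚ β)
  rw [h0, map_zero] at h2
  have e : ψ.toRatAlgHom (genβ β) = ψ (genβ β) := rfl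
  rw [e] at h2
  exact h2

lemma embed_classify (β : ℝ) (h : IsIntegral ℚ β) (hdeg : (minpoly ℚ β).natDegree = 3)
    (σ : Qbeta β →+* ℂ) (hσ : (σ (genβ β)).im ≠ 0) (φ : Qbeta β →+* ℂ) :
    φ = Complex.ofRealHom.comp (algebraMap (Qbeta β) ℝ) ∨ φ = σ ∨
      φ = (starRingEnd ℂ).comp σ := by
  classical
  set q := minpoly ℚ β with hq
  have hq0 : q ≠ 0 := minpoly.ne_zero h
  set r1 : ℂ := (β : ℂ)
  set r2 : ℂ := σ (genβ β)
  set r3 : ℂ := (starRingEnd ℂ) r2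
  have hr1 : aeval r1 q = 0 := by
    have h0 := minpoly.aeval ℚ β
    have h2 := aeval_algHom_apply Complex.ofRealHom.toRatAlgHom β q
    rw [h0, map_zero] at h2
    have e : Complex.ofRealHom.toRatAlgHom β = r1 := rfl
    rw [e] at h2
    exact h2
  have hr2 : aeval r2 q = 0 := gen_image_root β h σ
  have hr3 : aeval r3 q = 0 := by
    have h2 := aeval_algHom_apply (starRingEnd ℂ).toRatAlgHom r2 q
    rw [hr2, map_zero] at h2
    have e : (starRingEnd ℂ).toRatAlgHom r2 = r3 := rfl
    rw [e] at h2
    exact h2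
  set p : ℂ[X] := q.map (algebraMap ℚ ℂ) with hp
  have hp0 : p ≠ 0 := Polynomial.map_ne_zero hq0
  have hpdeg : p.natDegree = 3 := by
    rw [hp, Polynomial.natDegree_map, hdeg]
  have hmem : ∀ z : ℂ, aeval z q = 0 → z ∈ p.roots.toFinset := by
    intro z hz
    rw [Multiset.mem_toFinset, mem_roots hp0, IsRoot, hp, eval_map, ← aeval_def, hz]
  have him : r2.im ≠ 0 := hσ
  have h12 : r1 ≠ r2 := fun e => him (by rw [← e]; simp [r1])
  have h13 : r1 ≠ r3 := fun e => him (by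
    have : r3.im = 0 := by rw [← e]; simp [r1]
    simpa [r3, Complex.conj_im, neg_eq_zero] using this)
  have h23 : r2 ≠ r3 := fun e => him (by
    have : r2.im = r3.im := by rw [e]
    simp only [r3, Complex.conj_im] at this
    linarith)
  set F : Finset ℂ := {r1, r2, r3} with hF
  have hFcard : F.card = 3 := by
    rw [hF, Finset.card_insert_of_notMem (by simp [h12, h13]),
        Finset.card_insert_of_notMem (by simp [h23]), Finset.card_singleton]
  have hFsub : F ⊆ p.roots.toFinset := by
    intro z hz
    simp only [hF, Finset.mem_insert, Finset.mem_singleton] at hz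
    rcases hz with rfl | rfl | rfl
    exacts [hmem _ hr1, hmem _ hr2, hmem _ hr3]
  have hcard3 : p.roots.toFinset.card ≤ 3 := by
    calc p.roots.toFinset.card ≤ Multiset.card p.roots := Multiset.toFinset_card_le _
      _ ≤ p.natDegree := Polynomial.card_roots' p
      _ = 3 := hpdeg
  have hin : φ (genβ β) ∈ F := by
    by_contra hnot
    have hc4 : (insert (φ (genβ β)) F).card = 4 := by
      rw [Finset.card_insert_of_notMem hnot, hFcard]
    have hsub : insert (φ (genβ β)) F ⊆ p.roots.toFinset :=
      Finset.insert_subset (hmem _ (gen_image_root β h φ)) hFsub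
    have := Finset.card_le_card hsub
    omega
  simp only [hF, Finset.mem_insert, Finset.mem_singleton] at hin
  rcases hin with he | he | he
  · exact Or.inl (ringHom_ext' β h _ _ (by rw [he]; rfl))
  · exact Or.inr (Or.inl (ringHom_ext' β h _ _ he))
  · exact Or.inr (Or.inr (ringHom_ext' β h _ _ (by rw [he]; rfl)))

lemma compatible_digits (β y : ℝ) (w : List ℤ) (h : Compatible β y w) :
    ∀ d ∈ w, (0:ℤ) ≤ d ∧ d ≤ ⌈β⌉ - 1 := by
  intro d hd
  obtain ⟨⟨j, hj⟩, rfl⟩ := List.mem_iff_get.mp hd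
  have h1 := h.1 ((j : ℤ) + 1 - w.length)
  have he : extSeq β y w ((j : ℤ) + 1 - w.length) = w.get ⟨j, hj⟩ := by
    unfold extSeq
    rw [if_neg (by omega), if_pos (by omega)]
    have hj' : ((j : ℤ) + 1 - w.length + w.length - 1).toNat = j := by omega
    rw [hj']
    simp [List.getD_eq_getElem?_getD, List.getElem?_eq_getElem hj]
  rw [he] at h1
  exact h1

lemma tile_bound (β : ℝ) (hβ1 : 1 < β) (σ : Qbeta β →+* ℂ)
    (hσb : ‖σ (genβ β)‖ < 1) (y : Qbeta β) (z : ℂ) (hz : z ∈ tile β σ y) :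
    ‖z - σ y‖ ≤ ((⌈β⌉ : ℝ) - 1) / (1 - ‖σ (genβ β)‖) := by
  have hD : (0:ℝ) ≤ (⌈β⌉ : ℝ) - 1 := by
    have := Int.le_ceil β
    push_cast at this ⊢
    linarith
  set R0 := ((⌈β⌉ : ℝ) - 1) / (1 - ‖σ (genβ β)‖) with hR0
  obtain ⟨c, hc, hcz⟩ := hz
  have hsub : {z | ∃ w : List ℤ, Compatible β (y : ℝ) w ∧
      ∃ x : Qbeta β, (x : ℝ) = wordValue β w ∧ z = σ x} ⊆ Metric.closedBall 0 R0 := by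
    rintro z' ⟨w, hcomp, x, hx, rfl⟩
    have hdig := compatible_digits β (y : ℝ) w hcomp
    have hxK : x = wvGen (genβ β) w := by
      apply Subtype.coe_injective
      show (x : ℝ) = ((wvGen (genβ β) w : Qbeta β) : ℝ)
      have hcoe : ((wvGen (genβ β) w : Qbeta β) : ℝ) = wvGen β w :=
        wvGen_map (algebraMap (Qbeta β) ℝ) (genβ β) w
      rw [hx, hcoe, wvGen_real]
    have hσx : σ x = wvGen (σ (genβ β)) w := by
      rw [hxK]; exact wvGen_map σ (genβ β) w
    rw [Metric.mem_closedBall, dist_zero_right, hσx]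
    apply wvGen_norm_le hσb hD
    intro d hd
    refine ⟨(hdig d hd).1, ?_⟩
    have := (hdig d hd).2
    push_cast
    exact_mod_cast this
  have hcball : c ∈ Metric.closedBall (0:ℂ) R0 :=
    closure_minimal hsub Metric.isClosed_closedBall hc
  rw [Metric.mem_closedBall, dist_zero_right] at hcball
  have : z - σ y = c := by rw [← hcz]; ring
  rw [this]
  exact hcball


theorem statement12 (β : ℝ) (hpu : IsPisotUnit β)
    (hdeg : (minpoly ℚ β).natDegree = 3) (hnr : NonRealConjugates β)
    (σ : Qbeta β →+* ℂ) (hσ : (σ (genβ β)).im ≠ 0) :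
    ∃ C : ℕ, 0 < C ∧ ∀ z : ℂ,
      {y : Qbeta β | (y : ℝ) ∈ Subring.closure ({β, β⁻¹} : Set ℝ) ∧
        (y : ℝ) ∈ Set.Ico (0 : ℝ) 1 ∧ z ∈ tile β σ y}.Finite ∧
      {y : Qbeta β | (y : ℝ) ∈ Subring.closure ({β, β⁻¹} : Set ℝ) ∧
        (y : ℝ) ∈ Set.Ico (0 : ℝ) 1 ∧ z ∈ tile β σ y}.ncard ≤ C := by
  classical
  have hβ1 : 1 < β := hpu.1.1
  have hβZ : IsIntegral ℤ β := hpu.1.2.1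
  have hβQ : IsIntegral ℚ β := hβZ.tower_top
  haveI : FiniteDimensional ℚ (Qbeta β) := IntermediateField.adjoin.finiteDimensional hβQ
  haveI : NumberField (Qbeta β) := ⟨⟩
  -- the conjugate σ(β) has modulus < 1
  have hσb : ‖σ (genβ β)‖ < 1 := by
    have hne : σ (genβ β) ≠ (β : ℂ) := fun e => hσ (by rw [e]; simp)
    have := hpu.1.2.2 (σ (genβ β)) (gen_image_root β hβQ σ) hne
    exact this
  have h1σ : 0 < 1 - ‖σ (genβ β)‖ := by linarith
  have hD : (0:ℝ) ≤ (⌈β⌉ : ℝ) - 1 := by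
    have := Int.le_ceil β
    push_cast at this ⊢
    linarith
  set R0 := ((⌈β⌉ : ℝ) - 1) / (1 - ‖σ (genβ β)‖) with hR0def
  have hR0 : 0 ≤ R0 := div_nonneg hD (le_of_lt h1σ)
  set B := 2 * R0 + 1 with hBdef
  set S := {x : Qbeta β | IsIntegral ℤ x ∧ ∀ φ : Qbeta β →+* ℂ, ‖φ x‖ ≤ B} with hSdef
  have hS : S.Finite := NumberField.Embeddings.finite_of_norm_le (Qbeta β) ℂ B
  -- integrality of ring elements
  have hint : ∀ y : Qbeta β, (y : ℝ) ∈ Subring.closure ({β, β⁻¹} : Set ℝ) →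
      IsIntegral ℤ y := by
    intro y hy
    have hsub : Subring.closure ({β, β⁻¹} : Set ℝ) ≤ (integralClosure ℤ ℝ).toSubring := by
      rw [Subring.closure_le]
      rintro x hx
      simp only [Set.mem_insert_iff, Set.mem_singleton_iff] at hx
      rcases hx with rfl | rfl
      · exact hβZ
      · exact hpu.2
    have hyR : IsIntegral ℤ (y : ℝ) := hsub hy
    exact (isIntegral_algebraMap_iff (algebraMap (Qbeta β) ℝ).injective).mp hyR
  refine ⟨S.ncard + 1, Nat.succ_pos _, fun z => ?_⟩
  set A := {y : Qbeta β | (y : ℝ) ∈ Subring.closure ({β, β⁻¹} : Set ℝ) ∧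
      (y : ℝ) ∈ Set.Ico (0 : ℝ) 1 ∧ z ∈ tile β σ y} with hAdef
  rcases Set.eq_empty_or_nonempty A with hA | ⟨y₀, hy₀⟩
  · rw [hA]
    exact ⟨Set.finite_empty, by simp⟩
  · have key : ∀ y ∈ A, y - y₀ ∈ S := by
      intro y hy
      refine ⟨(hint y hy.1).sub (hint y₀ hy₀.1), ?_⟩
      intro φ
      have hty := tile_bound β hβ1 σ hσb y z hy.2.2
      have hty₀ := tile_bound β hβ1 σ hσb y₀ z hy₀.2.2
      have hσsub : ‖σ (y - y₀)‖ ≤ 2 * R0 := by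
        rw [map_sub]
        calc ‖σ y - σ y₀‖ = ‖-(z - σ y) + (z - σ y₀)‖ := by ring_nf
          _ ≤ ‖-(z - σ y)‖ + ‖z - σ y₀‖ := norm_add_le _ _
          _ = ‖z - σ y‖ + ‖z - σ y₀‖ := by rw [norm_neg]
          _ ≤ R0 + R0 := add_le_add hty hty₀
          _ = 2 * R0 := by ring
      have hreal : ‖((((y - y₀ : Qbeta β)) : ℝ) : ℂ)‖ ≤ 1 := by
        rw [Complex.norm_real]
        have hcoe : ((y - y₀ : Qbeta β) : ℝ) = (y : ℝ) - (y₀ : ℝ) := rfl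
        rw [hcoe]
        have h1 := hy.2.1
        have h2 := hy₀.2.1
        rw [Set.mem_Ico] at h1 h2
        rw [Real.norm_eq_abs, abs_le]
        constructor <;> linarith [h1.1, h1.2, h2.1, h2.2]
      rcases embed_classify β hβQ hdeg σ hσ φ with hφ | hφ | hφ <;> rw [hφ]
      · calc ‖(Complex.ofRealHom.comp (algebraMap (Qbeta β) ℝ)) (y - y₀)‖
            = ‖((((y - y₀ : Qbeta β)) : ℝ) : ℂ)‖ := rfl
          _ ≤ 1 := hreal
          _ ≤ B := by rw [hBdef]; linarith
      · calc ‖σ (y - y₀)‖ ≤ 2 * R0 := hσsub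
          _ ≤ B := by rw [hBdef]; linarith
      · calc ‖((starRingEnd ℂ).comp σ) (y - y₀)‖ = ‖(starRingEnd ℂ) (σ (y - y₀))‖ := rfl
          _ = ‖σ (y - y₀)‖ := by rw [RCLike.norm_conj]
          _ ≤ 2 * R0 := hσsub
          _ ≤ B := by rw [hBdef]; linarith
    have hinj : Set.InjOn (fun y : Qbeta β => y - y₀) A := by
      intro a _ b _ hab
      simpa using sub_left_injective hab
    have himg : (fun y : Qbeta β => y - y₀) '' A ⊆ S := by
      rintro _ ⟨y, hy, rfl⟩
      exact key y hy
    have hAfin : A.Finite := Set.Finite.of_finite_image (hS.subset himg) hinj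
    refine ⟨hAfin, ?_⟩
    have : A.ncard = ((fun y : Qbeta β => y - y₀) '' A).ncard :=
      (Set.ncard_image_of_injOn hinj).symm
    rw [this]
    have := Set.ncard_le_ncard himg hS
    omega


end
end

section
/- Let β > 1 be a real number with γ(β) > 0. Then β is an algebraic integer and β⁻¹ is an algebraic integer; that is, β is a unit of the ring of integers of the number field it generates. -/
open Polynomial

noncomputable section

/-- Iterating the β-transformation `n` times expresses `T^n y` as
`β^n y` minus an integer polynomial in `β` (the digits). -/
lemma betaT_iter_eq (β y : ℝ) : ∀ n : ℕ, ∃ d : ℕ → ℤ,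
    (betaT β)^[n] y = β ^ n * y - ∑ i ∈ Finset.range n, (d i : ℝ) * β ^ i := by
  intro n
  induction n with
  | zero => exact ⟨fun _ => 0, by simp⟩
  | succ n ih =>
    obtain ⟨d, hd⟩ := ih
    refine ⟨fun i => if i = 0 then ⌊β * (betaT β)^[n] y⌋ else d (i - 1), ?_⟩
    rw [Function.iterate_succ_apply', Finset.sum_range_succ']
    simp only [Nat.add_sub_cancel, if_neg (Nat.succ_ne_zero _), if_pos rfl]
    have hs : β * ∑ i ∈ Finset.range n, (d i : ℝ) * β ^ i
        = ∑ i ∈ Finset.range n, (d i : ℝ) * β ^ (i + 1) := by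
      rw [Finset.mul_sum]; exact Finset.sum_congr rfl fun i _ => by ring
    rw [betaT, hd, mul_sub, hs]
    push_cast
    ring

/-- From an identity `β^p = 1 + q·G(β)` with `G` an integer polynomial and `p ≥ 1`,
produce a monic integer polynomial vanishing at `β` with constant coefficient `≡ -1 mod q`. -/
lemma exists_monic_poly (β : ℝ) (p : ℕ) (hp : 1 ≤ p) (q : ℕ) (d : ℕ → ℤ)
    (heq : β ^ p = 1 + (q:ℝ) * ∑ i ∈ Finset.range p, (d i : ℝ) * β ^ i) :
    ∃ P : ℤ[X], P.Monic ∧ aeval β P = 0 ∧ ∃ e : ℤ, P.coeff 0 = -((q:ℤ) * e + 1) := by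
  refine ⟨X ^ p - (∑ i ∈ Finset.range p, C ((q:ℤ) * d i) * X ^ i + 1), ?_, ?_, d 0, ?_⟩
  · apply monic_X_pow_sub
    apply lt_of_le_of_lt (degree_add_le _ _)
    rw [max_lt_iff]
    constructor
    · apply lt_of_le_of_lt (degree_sum_le _ _)
      rw [Finset.sup_lt_iff (by exact_mod_cast WithBot.bot_lt_coe p)]
      intro i hi
      exact lt_of_le_of_lt (degree_C_mul_X_pow_le _ _)
        (by exact_mod_cast Finset.mem_range.mp hi)
    · exact lt_of_le_of_lt degree_one_le (by exact_mod_cast hp)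
  · simp only [map_sub, map_add, map_sum, map_pow, aeval_X, aeval_C, map_one, map_mul,
      eq_intCast, Int.cast_mul, Int.cast_natCast]
    rw [heq, Finset.mul_sum]
    simp [mul_assoc]
    ring
  · have h0 : 0 ∈ Finset.range p := Finset.mem_range.mpr hp
    simp [coeff_X_pow, finset_sum_coeff, coeff_C_mul,
      Finset.sum_ite_eq', h0, (Nat.one_le_iff_ne_zero.mp hp).symm]

/-- If `β > 1` is integral over `ℤ` and the constant coefficient of its minimal
polynomial over `ℤ` is `±1`, then `β⁻¹` is integral over `ℤ`. -/
lemma isIntegral_inv_of_coeff_zero (β : ℝ) (hβ : 1 < β)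
    (hc0 : (minpoly ℤ β).coeff 0 = 1 ∨ (minpoly ℤ β).coeff 0 = -1) :
    IsIntegral ℤ β⁻¹ := by
  set m := minpoly ℤ β with hm
  set n := m.natDegree with hn
  set g : ℤ[X] := ∑ i ∈ Finset.range (n + 1), C (m.coeff 0 * m.coeff (n - i)) * X ^ i with hg
  have hβ0 : β ≠ 0 := by linarith
  have hgmonic : g.Monic := by
    apply monic_of_natDegree_le_of_coeff_eq_one n
    · apply Polynomial.natDegree_sum_le_of_forall_le
      intro i hi
      apply le_trans (natDegree_C_mul_le _ _)
      rw [natDegree_X_pow]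
      exact Nat.lt_succ_iff.mp (Finset.mem_range.mp hi)
    · have hn1 : n ∈ Finset.range (n + 1) := Finset.mem_range.mpr (Nat.lt_succ_self n)
      rw [hg]
      simp only [finset_sum_coeff, coeff_C_mul, coeff_X_pow]
      rw [Finset.sum_eq_single n]
      · simp only [if_pos rfl, Nat.sub_self, mul_one]
        rcases hc0 with h | h <;> rw [h] <;> simp
      · intro b _ hb; simp [Ne.symm hb]
      · intro hn2; exact absurd hn1 hn2
  refine ⟨g, hgmonic, ?_⟩
  have key : β ^ n * aeval β⁻¹ g = (m.coeff 0 : ℝ) * aeval β m := by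
    rw [hg]
    simp only [map_sum, map_mul, map_pow, aeval_X, aeval_C, map_intCast, eq_intCast,
      Int.cast_mul]
    rw [Finset.mul_sum, Polynomial.aeval_eq_sum_range, Finset.mul_sum,
      ← Finset.sum_range_reflect _ (n + 1)]
    refine Finset.sum_congr rfl fun i hi => ?_
    have hle : i ≤ n := Nat.lt_succ_iff.mp (Finset.mem_range.mp hi)
    rw [show n + 1 - 1 - i = n - i from by omega, show n - (n - i) = i from by omega,
      zsmul_eq_mul, inv_pow]
    have hpow : β ^ n * (β ^ (n - i))⁻¹ = β ^ i := by
      rw [mul_inv_eq_iff_eq_mul₀ (pow_ne_zero _ hβ0), ← pow_add]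
      congr 1
      omega
    calc β ^ n * ((m.coeff 0 : ℝ) * (m.coeff i : ℝ) * (β ^ (n - i))⁻¹)
        = (m.coeff 0 : ℝ) * ((m.coeff i : ℝ) * (β ^ n * (β ^ (n - i))⁻¹)) := by ring
      _ = (m.coeff 0 : ℝ) * ((m.coeff i : ℝ) * β ^ i) := by rw [hpow]
  have hm0 : aeval β m = 0 := minpoly.aeval ℤ β
  rw [hm0, mul_zero] at key
  exact (mul_eq_zero.mp key).resolve_left (pow_ne_zero n hβ0)


theorem statement14 (β : ℝ) (hβ : 1 < β) (h : 0 < gamma β) :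
    IsIntegral ℤ β ∧ IsIntegral ℤ β⁻¹ := by
  rw [gamma] at h
  have hSne : Set.Nonempty {c | c ∈ Set.Ico (0 : ℝ) 1 ∧
      ∀ r : ℚ, 0 ≤ (r : ℝ) → (r : ℝ) ≤ c → PurelyPeriodic β (r : ℝ)} := by
    by_contra h'
    rw [Set.not_nonempty_iff_eq_empty] at h'
    rw [h', Real.sSup_empty] at h
    exact lt_irrefl 0 h
  obtain ⟨c, hcS, hc⟩ := exists_lt_of_lt_csSup hSne h
  -- key construction: any admissible denominator `q` yields a monic polynomial
  have hkey : ∀ q : ℕ, 1 ≤ q → 1 / (q:ℝ) ≤ c →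
      ∃ P : ℤ[X], P.Monic ∧ aeval β P = 0 ∧ ∃ e : ℤ, P.coeff 0 = -((q:ℤ) * e + 1) := by
    intro q hq hqc
    have hq0 : (0:ℝ) < q := by exact_mod_cast hq
    have hr : PurelyPeriodic β (((1/q : ℚ)) : ℝ) := by
      refine hcS.2 (1/q) (by positivity) ?_
      push_cast
      exact hqc
    obtain ⟨p, hp, hper⟩ := hr
    obtain ⟨d, hd⟩ := betaT_iter_eq β (((1/q : ℚ)) : ℝ) p
    rw [hper] at hd
    have hcast : (((1/q : ℚ)) : ℝ) = 1 / (q:ℝ) := by push_cast; ring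
    rw [hcast] at hd
    have heq : β ^ p = 1 + (q:ℝ) * ∑ i ∈ Finset.range p, (d i : ℝ) * β ^ i := by
      have h2 := hd
      field_simp at h2
      linarith [h2]
    exact exists_monic_poly β p hp q d heq
  -- choose one admissible q to get integrality of β
  obtain ⟨k, hk⟩ := exists_nat_gt (1/c)
  have hk0 : (0:ℝ) < k := lt_trans (by positivity) hk
  have hk1 : 1 ≤ k := by exact_mod_cast Nat.one_le_iff_ne_zero.mpr (by
    intro h0; rw [h0] at hk0; simp at hk0)
  have hkc : 1 / (k:ℝ) ≤ c := by
    rw [div_le_iff₀ hk0]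
    have := (div_lt_iff₀ (by positivity : (0:ℝ) < c)).mp hk
    nlinarith
  obtain ⟨P₁, hP1m, hP1e, _⟩ := hkey k hk1 hkc
  have hint : IsIntegral ℤ β := ⟨P₁, hP1m, hP1e⟩
  refine ⟨hint, ?_⟩
  -- the constant coefficient of the minimal polynomial divides every `-(q e + 1)`
  set c0 := (minpoly ℤ β).coeff 0 with hc0def
  have hdvd : ∀ q : ℕ, 1 ≤ q → 1 / (q:ℝ) ≤ c → ∃ e : ℤ, c0 ∣ ((q:ℤ) * e + 1) := by
    intro q hq hqc
    obtain ⟨P, hPm, hPe, e, hPc⟩ := hkey q hq hqc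
    have hdv : minpoly ℤ β ∣ P := minpoly.isIntegrallyClosed_dvd hint hPe
    obtain ⟨H, hH⟩ := hdv
    refine ⟨e, -H.coeff 0, ?_⟩
    have h1 : P.coeff 0 = c0 * H.coeff 0 := by rw [hH, mul_coeff_zero]
    rw [hPc] at h1
    linarith [h1]
  -- conclude c0 = ±1
  have habs : c0.natAbs = 1 := by
    by_contra hne
    set a := max c0.natAbs 2 with ha
    have ha2 : 2 ≤ a := le_max_right _ _
    set q := a * k with hq
    have hq1 : 1 ≤ q := by
      have : 1 ≤ a := by omega
      exact Nat.one_le_iff_ne_zero.mpr (Nat.mul_ne_zero (by omega) (by omega))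
    have hkq : (k:ℝ) ≤ (q:ℝ) := by
      have : k ≤ q := by
        calc k = 1 * k := (one_mul k).symm
        _ ≤ a * k := Nat.mul_le_mul_right k (by omega)
      exact_mod_cast this
    have hqc : 1 / (q:ℝ) ≤ c := by
      refine le_trans ?_ hkc
      apply one_div_le_one_div_of_le hk0 hkq
    obtain ⟨e, hce⟩ := hdvd q hq1 hqc
    by_cases h0 : c0 = 0
    · rw [h0] at hce
      have hz : (q:ℤ) * e + 1 = 0 := zero_dvd_iff.mp hce
      have hdq : (q:ℤ) ∣ 1 := ⟨-e, by linarith⟩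
      have := Int.le_of_dvd one_pos hdq
      have hq2 : 2 ≤ q := by
        calc 2 = 2 * 1 := rfl
        _ ≤ a * k := Nat.mul_le_mul ha2 hk1
      have : (2:ℤ) ≤ (q:ℤ) := by exact_mod_cast hq2
      omega
    · have h00 : c0.natAbs ≠ 0 := fun hh => h0 (Int.natAbs_eq_zero.mp hh)
      have hna : 2 ≤ c0.natAbs := by omega
      have haa : a = c0.natAbs := max_eq_left hna
      have h1 : c0 ∣ (q:ℤ) := by
        rw [← Int.natAbs_dvd]
        have : (c0.natAbs : ℤ) ∣ (q:ℤ) := by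
          exact_mod_cast (⟨k, by rw [hq, haa]⟩ : c0.natAbs ∣ q)
        exact this
      have h2 : c0 ∣ 1 := by
        have := dvd_sub hce (h1.mul_right e)
        simpa using this
      have := Int.isUnit_iff.mp (isUnit_of_dvd_one h2)
      rcases this with h | h <;> rw [h] at hna <;> simp at hna
  exact isIntegral_inv_of_coeff_zero β hβ (Int.natAbs_eq_iff.mp habs)

end
end

section
/- Let β be a Salem number. Then no rational number in (0,1) has a purely periodic β-expansion; in particular γ(β) = 0. -/
open Polynomial

noncomputable section

/-- `β` is a Salem number. -/
def IsSalem (β : ℝ) : Prop :=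
  1 < β ∧ IsIntegral ℤ β ∧
    (∀ z : ℂ, aeval z (minpoly ℚ β) = 0 → z ≠ (β : ℂ) → ‖z‖ ≤ 1) ∧
    (∃ z : ℂ, aeval z (minpoly ℚ β) = 0 ∧ ‖z‖ = 1)


/-- Auxiliary: conjugation commutes with `aeval` of rational polynomials. -/
lemma aeval_star_rat (P : Polynomial ℚ) (z : ℂ) :
    aeval ((starRingEnd ℂ) z) P = (starRingEnd ℂ) (aeval z P) := by
  rw [aeval_def, aeval_def, Polynomial.hom_eval₂]
  congr 1
  exact Subsingleton.elim _ _

/-- Core lemma: for a Salem number (indeed for any algebraic integer `β > 1`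
with a Galois conjugate on the unit circle), no positive rational has a purely
periodic β-expansion. -/
lemma salem_no_purely_periodic (β : ℝ) (hβ : 1 < β) (hint : IsIntegral ℤ β)
    (z : ℂ) (hz : aeval z (minpoly ℚ β) = 0) (habs : ‖z‖ = 1) :
    ∀ r : ℚ, 0 < (r : ℝ) → ¬ PurelyPeriodic β (r : ℝ) := by
  intro r hr ⟨p, hp1, hper⟩
  have hβ0 : (0:ℝ) < β := lt_trans zero_lt_one hβ
  have hβne : (β:ℝ) ≠ 0 := ne_of_gt hβ0
  have hβQ : IsIntegral ℚ β := hint.tower_top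
  set m := minpoly ℚ β with hm
  have hz0 : z ≠ 0 := by
    intro h; rw [h] at habs; simp at habs
  have hconj : (starRingEnd ℂ) z = z⁻¹ := by
    have h1 : z * (starRingEnd ℂ) z = 1 := by
      rw [Complex.mul_conj]
      norm_cast
      rw [Complex.normSq_eq_norm_sq, habs]; norm_num
    field_simp [hz0] at h1 ⊢
    linear_combination h1
  -- the orbit and digits
  set t : ℕ → ℝ := fun i => (betaT β)^[i] (r:ℝ) with ht
  set c : ℕ → ℤ := fun i => ⌊β * t i⌋ with hc
  have htsucc : ∀ i, t (i+1) = β * t i - c i := by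
    intro i
    show (betaT β)^[i+1] (r:ℝ) = _
    rw [Function.iterate_succ_apply']
    rfl
  have htnonneg : ∀ i, 0 ≤ t i := by
    intro i
    cases i with
    | zero => exact le_of_lt hr
    | succ n =>
        have : t (n+1) = Int.fract (β * t n) := by
          rw [htsucc]; rfl
        rw [this]; exact Int.fract_nonneg _
  have hcnonneg : ∀ i, (0:ℤ) ≤ c i := by
    intro i
    exact Int.floor_nonneg.mpr (mul_nonneg (le_of_lt hβ0) (htnonneg i))
  -- the fundamental expansion identity
  have key : ∀ k, (r:ℝ) = (∑ i ∈ Finset.range k, (c i : ℝ) * (β⁻¹)^(i+1)) + t k * (β⁻¹)^k := by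
    intro k
    induction k with
    | zero => simp [ht]
    | succ n ih =>
        rw [Finset.sum_range_succ]
        have h := htsucc n
        have hstep : t n * (β⁻¹)^n
            = (c n : ℝ) * (β⁻¹)^(n+1) + t (n+1) * (β⁻¹)^(n+1) := by
          rw [h, pow_succ]
          field_simp
          ring
        rw [ih, hstep]; ring
  have hkp := key p
  rw [show t p = (r:ℝ) from hper] at hkp
  -- the polynomial P with root β
  set P : Polynomial ℚ :=
    C r * X^p - (∑ i ∈ Finset.range p, C ((c i : ℚ)) * X^(p-1-i)) - C r with hP
  have haevalP : ∀ {A : Type} [CommRing A] [Algebra ℚ A] (v : A),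
      aeval v P = (algebraMap ℚ A r) * v^p
        - (∑ i ∈ Finset.range p, (algebraMap ℚ A ((c i : ℚ))) * v^(p-1-i))
        - (algebraMap ℚ A r) := by
    intro A _ _ v
    simp [hP, map_sum]
  have hPβ : aeval β P = 0 := by
    rw [haevalP]
    have e1 : ∀ i ∈ Finset.range p, (c i:ℝ) * (β⁻¹)^(i+1) * β^p = (c i:ℝ) * β^(p-1-i) := by
      intro i hi
      have hip : i + 1 ≤ p := Finset.mem_range.mp hi
      have : β^(p-1-i) = β ^ p * (β ^ (i+1))⁻¹ := by
        rw [← pow_sub₀ β hβne hip]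
        congr 1
        omega
      rw [this, inv_pow]
      field_simp
    have hmul := congrArg (fun y : ℝ => y * β^p) hkp
    simp only [add_mul, Finset.sum_mul] at hmul
    rw [Finset.sum_congr rfl e1] at hmul
    have hβpinv : (β⁻¹)^p * β^p = 1 := by
      rw [inv_pow]
      exact inv_mul_cancel₀ (pow_ne_zero p hβne)
    have : (r:ℝ) * β^p = (∑ i ∈ Finset.range p, (c i:ℝ) * β^(p-1-i)) + (r:ℝ) := by
      rw [hmul, mul_assoc, hβpinv, mul_one]
    have hcast : ∀ i ∈ Finset.range p,
        (algebraMap ℚ ℝ ((c i : ℚ))) * β^(p-1-i) = (c i:ℝ) * β^(p-1-i) := by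
      intro i _
      norm_num [eq_ratCast]
    rw [Finset.sum_congr rfl hcast]
    have hrcast : algebraMap ℚ ℝ r = (r:ℝ) := eq_ratCast _ _
    rw [hrcast]
    linarith [this]
  -- transfer to z and to the conjugate z⁻¹
  have hmz : minpoly ℚ z = m :=
    (minpoly.eq_of_irreducible_of_monic (minpoly.irreducible hβQ) hz
      (minpoly.monic hβQ)).symm
  have hmdvdP : m ∣ P := minpoly.dvd ℚ β hPβ
  have hPz : aeval z P = 0 := by
    obtain ⟨s, hs⟩ := hmdvdP
    rw [hs, map_mul, hz, zero_mul]
  have hPzc : aeval (z⁻¹) P = 0 := by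
    rw [← hconj, aeval_star_rat, hPz, map_zero]
  -- the reversed polynomial P*
  set Pstar : Polynomial ℚ :=
    C r * X^p + (∑ i ∈ Finset.range p, C ((c i : ℚ)) * X^(i+1)) - C r with hPstar
  have haevalPstar : ∀ {A : Type} [CommRing A] [Algebra ℚ A] (v : A),
      aeval v Pstar = (algebraMap ℚ A r) * v^p
        + (∑ i ∈ Finset.range p, (algebraMap ℚ A ((c i : ℚ))) * v^(i+1))
        - (algebraMap ℚ A r) := by
    intro A _ _ v
    simp [hPstar, map_sum]
  have hPstarz : aeval z Pstar = 0 := by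
    rw [haevalPstar]
    rw [haevalP] at hPzc
    have hsum : (∑ i ∈ Finset.range p, (algebraMap ℚ ℂ ((c i : ℚ))) * (z⁻¹)^(p-1-i)) * z^p
        = ∑ i ∈ Finset.range p, (algebraMap ℚ ℂ ((c i : ℚ))) * z^(i+1) := by
      rw [Finset.sum_mul]
      apply Finset.sum_congr rfl
      intro i hi
      have hip : i + 1 ≤ p := Finset.mem_range.mp hi
      have h1 : z^(i+1) = z ^ p * (z ^ (p-1-i))⁻¹ := by
        rw [← pow_sub₀ z hz0 (by omega : p-1-i ≤ p)]
        congr 1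
        omega
      rw [inv_pow, h1]
      ring
    have hzpinv : (z⁻¹)^p * z^p = 1 := by
      rw [inv_pow]
      exact inv_mul_cancel₀ (pow_ne_zero p hz0)
    linear_combination (-(z^p)) * hPzc - hsum + (algebraMap ℚ ℂ r) * hzpinv
  -- back to β
  have hmdvdPstar : m ∣ Pstar := by
    rw [← hmz]
    exact minpoly.dvd ℚ z hPstarz
  have hPstarβ : aeval β Pstar = 0 := by
    obtain ⟨s, hs⟩ := hmdvdPstar
    rw [hs, map_mul, minpoly.aeval, zero_mul]
  rw [haevalPstar] at hPstarβ
  -- final contradiction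
  have hSnn : 0 ≤ ∑ i ∈ Finset.range p, (algebraMap ℚ ℝ ((c i : ℚ))) * β^(i+1) := by
    apply Finset.sum_nonneg
    intro i _
    apply mul_nonneg
    · rw [eq_ratCast]
      exact_mod_cast hcnonneg i
    · positivity
  have hrcast : algebraMap ℚ ℝ r = (r:ℝ) := eq_ratCast _ _
  rw [hrcast] at hPstarβ
  have hβp : (1:ℝ) < β^p := one_lt_pow₀ hβ (by omega)
  nlinarith [hPstarβ, hSnn, hβp, hr]

theorem statement16 (β : ℝ) (hS : IsSalem β) :
    (∀ r : ℚ, 0 < (r : ℝ) → (r : ℝ) < 1 → ¬ PurelyPeriodic β (r : ℝ)) ∧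
      gamma β = 0 := by
  obtain ⟨hβ, hint, _, z, hz, habs⟩ := hS
  have main := salem_no_purely_periodic β hβ hint z hz habs
  constructor
  · intro r hr0 _ hpp
    exact main r hr0 hpp
  · have hset : {c | c ∈ Set.Ico (0 : ℝ) 1 ∧
        ∀ r : ℚ, 0 ≤ (r : ℝ) → (r : ℝ) ≤ c → PurelyPeriodic β (r : ℝ)} = {0} := by
      ext cc
      simp only [Set.mem_setOf_eq, Set.mem_singleton_iff, Set.mem_Ico]
      constructor
      · rintro ⟨⟨hc0, hc1⟩, hall⟩
        by_contra hne
        have hcpos : 0 < cc := lt_of_le_of_ne hc0 (Ne.symm hne)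
        obtain ⟨q, hq0, hqc⟩ := exists_rat_btwn hcpos
        exact main q hq0 (hall q (le_of_lt hq0) (le_of_lt hqc))
      · rintro rfl
        refine ⟨⟨le_refl _, zero_lt_one⟩, ?_⟩
        intro r hr0 hr1
        have hr : (r:ℝ) = 0 := le_antisymm hr1 hr0
        rw [hr]
        refine ⟨1, le_refl _, ?_⟩
        simp [betaT]
    rw [gamma, hset, csSup_singleton]


end
end

section
/- Let β be a cubic Pisot unit with non-real Galois conjugates and let σ : ℚ(β) → ℂ be a field embedding with σ(β) ∉ ℝ. Then the central tile 𝒯 is a compact subset of ℂ. -/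
open Polynomial

noncomputable section

lemma iter_mem (β : ℝ) {y : ℝ} (hy : y ∈ Set.Ico (0:ℝ) 1) (i : ℕ) :
    (betaT β)^[i] y ∈ Set.Ico (0:ℝ) 1 := by
  induction i generalizing y with
  | zero => exact hy
  | succ n ih =>
    rw [Function.iterate_succ_apply]
    exact ih ⟨Int.fract_nonneg _, Int.fract_lt_one _⟩

lemma expand (β : ℝ) (k : ℕ) (y : ℝ) :
    β ^ k * y = (∑ i ∈ Finset.range k, (⌊β * ((betaT β)^[i] y)⌋ : ℝ) * β ^ (k - 1 - i))
      + (betaT β)^[k] y := by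
  induction k generalizing y with
  | zero => simp
  | succ k ih =>
    have h1 : β ^ (k+1) * y = β ^ k * (betaT β y) + (⌊β * y⌋ : ℝ) * β ^ k := by
      rw [betaT]; ring
    rw [h1, ih (betaT β y)]
    rw [Finset.sum_range_succ' (fun i => (⌊β * ((betaT β)^[i] y)⌋ : ℝ) * β ^ (k + 1 - 1 - i)) k]
    simp only [Function.iterate_succ_apply, Function.iterate_zero_apply]
    have he : ∀ i, k + 1 - 1 - (i+1) = k - 1 - i := by omega
    simp only [he]
    have h0 : k + 1 - 1 - 0 = k := by omega
    rw [h0]; ring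

theorem statement17 (β : ℝ) (hpu : IsPisotUnit β)
    (hdeg : (minpoly ℚ β).natDegree = 3) (hnr : NonRealConjugates β)
    (σ : Qbeta β →+* ℂ) (hσ : (σ (genβ β)).im ≠ 0) :
    IsCompact (centralTile β σ) := by
  obtain ⟨⟨hβ1, hβint, hpisot⟩, -⟩ := hpu
  have hβ0 : (0:ℝ) < β := lt_trans one_pos hβ1
  -- σ(genβ) is a conjugate of β of modulus < 1
  have hqint : IsIntegral ℚ β := hβint.tower_top
  have hgroot : aeval (genβ β) (minpoly ℚ β) = 0 := by
    have h1 : ((aeval (genβ β) (minpoly ℚ β) : Qbeta β) : ℝ) = aeval β (minpoly ℚ β) := by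
      show (Qbeta β).val ((aeval (genβ β)) (minpoly ℚ β)) = _
      exact (Polynomial.aeval_algHom_apply (Qbeta β).val (genβ β) (minpoly ℚ β)).symm
    rw [minpoly.aeval ℚ β] at h1
    exact Subtype.ext (by simpa using h1)
  have hσroot : aeval (σ (genβ β)) (minpoly ℚ β) = 0 := by
    have h := (Polynomial.aeval_algHom_apply σ.toRatAlgHom (genβ β) (minpoly ℚ β)).symm
    rw [hgroot, map_zero] at h
    exact h.symm
  set c : ℝ := ‖σ (genβ β)‖ with hc
  have hc1 : c < 1 := by
    apply hpisot _ hσroot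
    intro h
    apply hσ
    rw [h]
    simp
  have hc0 : (0:ℝ) ≤ c := norm_nonneg _
  -- boundedness
  have hbound : {z | ∃ x : Qbeta β, (x : ℝ) ∈ IntBeta β ∧ z = σ x}
      ⊆ Metric.closedBall 0 (β * (1 - c)⁻¹) := by
    rintro z ⟨x, ⟨hx0, k, hy, hT⟩, rfl⟩
    set y : ℝ := β ^ (-(k:ℤ)) * (x:ℝ) with hydef
    have hxy : (x:ℝ) = β ^ k * y := by
      rw [hydef, ← mul_assoc, ← zpow_natCast β k, ← zpow_add₀ (ne_of_gt hβ0)]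
      simp
    have hsum : (x:ℝ) = ∑ i ∈ Finset.range k, (⌊β * ((betaT β)^[i] y)⌋ : ℝ) * β ^ (k - 1 - i) := by
      rw [hxy, expand β k y, hT, add_zero]
    -- identify x in Qbeta
    have hxQ : x = ∑ i ∈ Finset.range k, (⌊β * ((betaT β)^[i] y)⌋ : Qbeta β) * (genβ β) ^ (k - 1 - i) := by
      apply (Qbeta β).val.injective
      push_cast [map_sum, map_mul, map_pow, map_intCast]
      convert hsum using 2
      all_goals rfl
    have hσx : σ x = ∑ i ∈ Finset.range k, (⌊β * ((betaT β)^[i] y)⌋ : ℂ) * (σ (genβ β)) ^ (k - 1 - i) := by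
      rw [hxQ, map_sum]
      simp [map_mul, map_pow, map_intCast]
    rw [Metric.mem_closedBall, dist_zero_right, hσx]
    calc ‖(∑ i ∈ Finset.range k, (⌊β * ((betaT β)^[i] y)⌋ : ℂ) * (σ (genβ β)) ^ (k - 1 - i))‖
        ≤ ∑ i ∈ Finset.range k, ‖((⌊β * ((betaT β)^[i] y)⌋ : ℂ) * (σ (genβ β)) ^ (k - 1 - i))‖ :=
          norm_sum_le _ _
      _ ≤ ∑ i ∈ Finset.range k, β * c ^ (k - 1 - i) := by
          apply Finset.sum_le_sum
          intro i hi
          rw [norm_mul, norm_pow]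
          apply mul_le_mul _ le_rfl (pow_nonneg hc0 _) (le_of_lt hβ0)
          have ht := iter_mem β hy i
          have hfl0 : (0:ℤ) ≤ ⌊β * ((betaT β)^[i] y)⌋ :=
            Int.le_floor.2 (by simpa using mul_nonneg (le_of_lt hβ0) ht.1)
          have hfl1 : (⌊β * ((betaT β)^[i] y)⌋ : ℝ) ≤ β := by
            calc (⌊β * ((betaT β)^[i] y)⌋ : ℝ) ≤ β * ((betaT β)^[i] y) := Int.floor_le _
              _ ≤ β * 1 := by
                  apply mul_le_mul_of_nonneg_left (le_of_lt ht.2) (le_of_lt hβ0)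
              _ = β := mul_one β
          rw [Complex.norm_intCast]
          rw [abs_of_nonneg (by exact_mod_cast hfl0)]
          exact_mod_cast hfl1
      _ = β * ∑ i ∈ Finset.range k, c ^ (k - 1 - i) := by rw [Finset.mul_sum]
      _ = β * ∑ i ∈ Finset.range k, c ^ i := by rw [Finset.sum_range_reflect (fun i => c ^ i) k]
      _ ≤ β * (1 - c)⁻¹ := by
          apply mul_le_mul_of_nonneg_left _ (le_of_lt hβ0)
          rw [← tsum_geometric_of_lt_one hc0 hc1]
          exact Summable.sum_le_tsum (Finset.range k) (fun i _ => pow_nonneg hc0 i)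
            (summable_geometric_of_lt_one hc0 hc1)
  exact Metric.isCompact_of_isClosed_isBounded isClosed_closure
    (((Metric.isBounded_closedBall).subset hbound).closure)


end
end
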